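/- arXiv:1811.05440 — 3 statements merged into one kernel-verified Lean document; each statement's English description precedes it below -/
import Mathlib

section
/- Let m, n ≥ 1, J ⊆ [m−1], K ⊆ [n−1]. Then Ψ(M_{m,J} · M_{n,K}) = (1−q)·Σ_r C(r, |J|+1)·C(r, |K|+1)·q^r, where M are monomial quasi-symmetric functions and Ψ sends x_{i_1}^{m_1}···x_{i_k}^{m_k} (i_1 < ... < i_k) to q^{i_k}. -/
open Finset

namespace CQSym

/-- The exponent-vector (weight) of a word with letters among the positive
integers: the monomial `x_{w 0} ⋯ x_{w (n-1)}`. -/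
noncomputable def wt {n : ℕ} (w : Fin n → ℕ+) : ℕ+ →₀ ℕ := ∑ i, Finsupp.single (w i) 1

/-- The fundamental quasi-symmetric function `F_{n,J}` for `J ⊆ [n-1]`
(1-based positions): the sum of `x_{w 0} ⋯ x_{w (n-1)}` over weakly increasing
words with a strict ascent at every position of `J`. -/
noncomputable def Fqsym (n : ℕ) (J : Finset ℕ) : MvPowerSeries ℕ+ ℤ :=
  fun d => (Nat.card {w : Fin n → ℕ+ //
    Monotone w ∧ (∀ i : Fin n, (i : ℕ) + 1 ∈ J → w i < w (finRotate n i)) ∧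
    wt w = d} : ℤ)

/-- The monomial quasi-symmetric function `M_{n,J}` for `J ⊆ [n-1]`:
the sum over weakly increasing words with a strict ascent exactly at the
positions of `J`. -/
noncomputable def Mqsym (n : ℕ) (J : Finset ℕ) : MvPowerSeries ℕ+ ℤ :=
  fun d => (Nat.card {w : Fin n → ℕ+ //
    Monotone w ∧
    (∀ i : Fin n, (i : ℕ) + 1 < n → (((i : ℕ) + 1 ∈ J) ↔ w i < w (finRotate n i))) ∧
    wt w = d} : ℤ)

/-- The fundamental cyclic quasi-symmetric function `F^cyc_{n,J}` for
`J ⊆ [n]` (1-based positions): the sum of `x_{w 0} ⋯ x_{w (n-1)}` over pairs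
`(w, k)` such that `w` is cyclically weakly increasing from position `k`
and has a (cyclic) strict ascent at every position of `J` except possibly
at the position just before `k`. -/
noncomputable def cFqsym (n : ℕ) (J : Finset ℕ) : MvPowerSeries ℕ+ ℤ :=
  fun d => (Nat.card {p : (Fin n → ℕ+) × Fin n //
    Monotone (fun i : Fin n => p.1 (p.2 + i)) ∧
    (∀ i : Fin n, (i : ℕ) + 1 ∈ J → i ≠ (finRotate n).symm p.2 →
      p.1 i < p.1 (finRotate n i)) ∧
    wt p.1 = d} : ℤ)

/-- The monomial cyclic quasi-symmetric function `M^cyc_{n,J}` for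
`J ⊆ [n]`: the sum of `x_{w 0} ⋯ x_{w (n-1)}` over pairs `(w, k)` such that
`w` is cyclically weakly increasing from position `k`, the position just
before `k` belongs to `J`, and at every other position the (cyclic) strict
ascents of `w` are exactly the positions of `J`. -/
noncomputable def cMqsym (n : ℕ) (J : Finset ℕ) : MvPowerSeries ℕ+ ℤ :=
  fun d => (Nat.card {p : (Fin n → ℕ+) × Fin n //
    Monotone (fun i : Fin n => p.1 (p.2 + i)) ∧
    (((finRotate n).symm p.2 : Fin n) : ℕ) + 1 ∈ J ∧
    (∀ i : Fin n, i ≠ (finRotate n).symm p.2 →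
      (((i : ℕ) + 1 ∈ J) ↔ p.1 i < p.1 (finRotate n i))) ∧
    wt p.1 = d} : ℤ)

/-- The cyclic shift `J - i` of a subset `J ⊆ [n]`, computed modulo `n`,
with representatives `1, …, n`. -/
def cshift (n : ℕ) (J : Finset ℕ) (i : ℕ) : Finset ℕ :=
  J.image fun j => (j + n - i - 1) % n + 1

/-- The complete homogeneous symmetric function `h_n`: the sum of all
monomials of degree `n`. -/
noncomputable def hqsym (n : ℕ) : MvPowerSeries ℕ+ ℤ :=
  fun d => if d.sum (fun _ e => e) = n then 1 else 0

open scoped Classical in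
/-- The elementary symmetric function `e_n`: the sum of all squarefree
monomials of degree `n`. -/
noncomputable def eqsym (n : ℕ) : MvPowerSeries ℕ+ ℤ :=
  fun d => if d.sum (fun _ e => e) = n ∧ ∀ x, d x ≤ 1 then 1 else 0

/-- The Schur function of hook shape `(n-k, 1^k)`, defined via semistandard
tableaux: a weakly increasing first row of length `n-k`, a strictly
increasing leg of length `k` below its first cell. -/
noncomputable def hookSchur (n k : ℕ) : MvPowerSeries ℕ+ ℤ :=
  fun d => (Nat.card {p : (Fin (n - k) → ℕ+) × (Fin k → ℕ+) //
    Monotone p.1 ∧ StrictMono p.2 ∧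
    (∀ (h1 : 0 < n - k) (h2 : 0 < k), p.1 ⟨0, h1⟩ < p.2 ⟨0, h2⟩) ∧
    wt p.1 + wt p.2 = d} : ℤ)

/-- The descent number of a word with (distinct) integer letters. -/
def des {N : ℕ} (w : Fin N → ℤ) : ℕ :=
  (Finset.univ.filter fun i : Fin N => (i : ℕ) + 1 < N ∧ w (finRotate N i) < w i).card

/-- The cyclic descent number of a word with (distinct) integer letters. -/
def cdes {N : ℕ} (w : Fin N → ℤ) : ℕ :=
  (Finset.univ.filter fun i : Fin N => w (finRotate N i) < w i).card

/-- `w` is a shuffle of `u` and `v`. -/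
def IsShuffle {m n : ℕ} (u : Fin m → ℤ) (v : Fin n → ℤ) (w : Fin (m + n) → ℤ) : Prop :=
  ∃ (f : Fin m → Fin (m + n)) (g : Fin n → Fin (m + n)),
    StrictMono f ∧ StrictMono g ∧ (∀ i, w (f i) = u i) ∧ (∀ j, w (g j) = v j) ∧
    (∀ x, (∃ i, f i = x) ∨ (∃ j, g j = x))

/-- The cyclic class `[w]` is a cyclic shuffle of `[u]` and `[v]`: some
cyclic rotation of `w` is a shuffle of cyclic rotations of `u` and `v`. -/
def IsCyclicShuffle {m n : ℕ} (u : Fin m → ℤ) (v : Fin n → ℤ) (w : Fin (m + n) → ℤ) : Prop :=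
  ∃ (kw : Fin (m + n)) (ku : Fin m) (kv : Fin n),
    IsShuffle (fun i => u (i + ku)) (fun i => v (i + kv)) (fun i => w (i + kw))

/-- Rotation equivalence of words satisfying a property `P`;  `Quot` of this
relation is the set of cyclic equivalence classes. -/
def RotRel {N : ℕ} (P : (Fin N → ℤ) → Prop) (w₁ w₂ : {w : Fin N → ℤ // P w}) : Prop :=
  ∃ k : Fin N, ∀ i, w₁.val i = w₂.val (i + k)

/-- Binomial coefficient with integer upper and lower arguments, zero for
negative lower argument. -/
noncomputable def zchoose (a b : ℤ) : ℤ := if 0 ≤ b then Ring.choose a b.toNat else 0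

/-- The map `Ψ`, sending a monomial `x_{i₁}^{m₁} ⋯ x_{i_k}^{m_k}`
(`i₁ < … < i_k`) to `q^{i_k}`, extended linearly. -/
noncomputable def psi (f : MvPowerSeries ℕ+ ℤ) : PowerSeries ℤ :=
  PowerSeries.mk fun r =>
    if r = 0 then MvPowerSeries.coeff 0 f
    else ∑ᶠ d ∈ {d : ℕ+ →₀ ℕ |
        ∃ m ∈ d.support, (∀ m' ∈ d.support, m' ≤ m) ∧ (m : ℕ) = r},
      MvPowerSeries.coeff d f

/-- The product `⊙` on `ℤ[[q]]` determined by `q^i ⊙ q^j = q^{max(i,j)}`. -/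
noncomputable def odot (a b : PowerSeries ℤ) : PowerSeries ℤ :=
  PowerSeries.mk fun r =>
    (PowerSeries.coeff r a) * (∑ s ∈ Finset.range (r + 1), PowerSeries.coeff s b) +
    (∑ s ∈ Finset.range r, PowerSeries.coeff s a) * (PowerSeries.coeff r b)

/-- A multivariate power series of bounded (total) degree. -/
def BoundedDeg (f : MvPowerSeries ℕ+ ℤ) : Prop :=
  ∃ D, ∀ d : ℕ+ →₀ ℕ, D < d.sum (fun _ e => e) → MvPowerSeries.coeff d f = 0

/-- Cellini's cyclic descent set of a permutation (0-based positions). -/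
def cDesF {n : ℕ} (w : Fin n → Fin n) : Finset (Fin n) :=
  Finset.univ.filter fun i => w (finRotate n i) < w i

/-- The ordinary descent set of a permutation (0-based positions). -/
def DesF {n : ℕ} (w : Fin n → Fin n) : Finset (Fin n) :=
  Finset.univ.filter fun i => (i : ℕ) + 1 < n ∧ w (finRotate n i) < w i



lemma val_finRotate {m : ℕ} (i : Fin m) (h : (i:ℕ)+1 < m) : ((finRotate m i : Fin m) : ℕ) = (i:ℕ) + 1 := by
  rcases m with _ | m
  · exact absurd i.isLt (by omega)
  · rw [finRotate_succ_apply, Fin.val_add_one_of_lt (by simp [Fin.lt_iff_val_lt_val]; omega)]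

lemma wt_apply {m : ℕ} (w : Fin m → ℕ+) (x : ℕ+) :
    wt w x = (univ.filter fun i => w i = x).card := by
  classical
  simp only [wt, Finsupp.finset_sum_apply, Finsupp.single_apply]
  rw [Finset.card_filter]

lemma mem_support_wt {m : ℕ} (w : Fin m → ℕ+) (x : ℕ+) :
    x ∈ (wt w).support ↔ ∃ i, w i = x := by
  classical
  rw [Finsupp.mem_support_iff, wt_apply, ← Nat.pos_iff_ne_zero, Finset.card_pos]
  simp [Finset.Nonempty]

/-- The ascent condition of `Mqsym`. -/
def Asc (m : ℕ) (J : Finset ℕ) (w : Fin m → ℕ+) : Prop :=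
  Monotone w ∧ ∀ i : Fin m, (i : ℕ) + 1 < m → (((i : ℕ) + 1 ∈ J) ↔ w i < w (finRotate m i))

lemma asc_step {m : ℕ} {J : Finset ℕ} {w : Fin m → ℕ+} (hw : Asc m J w)
    (i : ℕ) (h : i + 1 < m) :
    (i + 1 ∈ J ↔ w ⟨i, by omega⟩ < w ⟨i+1, h⟩) := by
  have := hw.2 ⟨i, by omega⟩ h
  rwa [show finRotate m ⟨i, by omega⟩ = ⟨i+1, h⟩ from Fin.ext (val_finRotate _ h)] at this

/-- words are constant on ascent-free intervals -/
lemma flat {m : ℕ} {J : Finset ℕ} {w : Fin m → ℕ+} (hw : Asc m J w)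
    (a : ℕ) (c : ℕ) (hc : a + c < m) (hJ : ∀ j ∈ J, ¬(a < j ∧ j ≤ a + c)) :
    w ⟨a, by omega⟩ = w ⟨a + c, hc⟩ := by
  induction c with
  | zero => rfl
  | succ c ih =>
    rw [ih (by omega) (fun j hj => by have := hJ j hj; omega)]
    have hnot : ¬ ((a + c) + 1 ∈ J) := fun hmem => hJ _ hmem (by omega)
    rw [asc_step hw (a+c) (by omega)] at hnot
    have hle : w ⟨a+c, by omega⟩ ≤ w ⟨a+c+1, by omega⟩ := hw.1 (by simp [Fin.le_def])
    have := lt_or_eq_of_le hle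
    tauto


variable {m : ℕ} {J : Finset ℕ}

/-- number of elements of `J` that are `≤ i` -/
def bfun (J : Finset ℕ) (i : ℕ) : ℕ := (J.filter (· ≤ i)).card

lemma bfun_le (i : ℕ) : bfun J i ≤ J.card := Finset.card_le_card (Finset.filter_subset _ _)

lemma bfun_mono {i i' : ℕ} (h : i ≤ i') : bfun J i ≤ bfun J i' :=
  Finset.card_le_card (fun j hj => by simp only [Finset.mem_filter] at *; exact ⟨hj.1, hj.2.trans h⟩)

lemma bfun_zero (hJ : J ⊆ Finset.Icc 1 (m-1)) : bfun J 0 = 0 := by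
  rw [bfun, Finset.card_eq_zero, Finset.filter_eq_empty_iff]
  intro j hj
  have := hJ hj; simp only [Finset.mem_Icc] at this; omega

lemma bfun_succ (i : ℕ) :
    bfun J (i+1) = bfun J i + (if i + 1 ∈ J then 1 else 0) := by
  rcases em (i + 1 ∈ J) with h | h
  · simp only [h, if_true, bfun]
    rw [show J.filter (· ≤ i + 1) = insert (i+1) (J.filter (· ≤ i)) by
      ext j; simp only [Finset.mem_insert, Finset.mem_filter]; constructor
      · rintro ⟨hj, hle⟩; rcases Nat.lt_or_ge j (i+1) with h' | h'
        · exact Or.inr ⟨hj, by omega⟩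
        · exact Or.inl (by omega)
      · rintro (rfl | ⟨hj, hle⟩); exacts [⟨h, le_refl _⟩, ⟨hj, by omega⟩]]
    rw [Finset.card_insert_of_notMem (by simp)]
  · simp only [h, if_false, bfun, add_zero]
    congr 1
    ext j; simp only [Finset.mem_filter]
    constructor
    · rintro ⟨hj, hle⟩; refine ⟨hj, ?_⟩
      rcases Nat.lt_or_ge j (i+1) with h' | h'; · omega
      · exact absurd (by omega : j = i + 1) (fun e => h (e ▸ hj))
    · rintro ⟨hj, hle⟩; exact ⟨hj, by omega⟩

/-- the `k`-th smallest element of `J` -/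
noncomputable def efun (J : Finset ℕ) (k : Fin J.card) : ℕ := J.orderEmbOfFin rfl k

lemma efun_mem (k : Fin J.card) : efun J k ∈ J := Finset.orderEmbOfFin_mem _ _ _

lemma efun_strictMono : StrictMono (efun J) := (J.orderEmbOfFin rfl).strictMono

lemma bfun_efun (k : Fin J.card) : bfun J (efun J k) = (k : ℕ) + 1 := by
  classical
  have himg : J.filter (· ≤ efun J k) = (univ.filter (fun l : Fin J.card => l ≤ k)).image (efun J) := by
    ext x
    simp only [Finset.mem_filter, Finset.mem_image, Finset.mem_univ, true_and]
    constructor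
    · rintro ⟨hx, hle⟩
      obtain ⟨l, rfl⟩ : ∃ l, efun J l = x := by
        have : x ∈ Set.range (J.orderEmbOfFin rfl) := by rw [Finset.range_orderEmbOfFin]; exact hx
        exact this
      exact ⟨l, (J.orderEmbOfFin rfl).le_iff_le.mp hle, rfl⟩
    · rintro ⟨l, hl, rfl⟩
      exact ⟨efun_mem l, (J.orderEmbOfFin rfl).le_iff_le.mpr hl⟩
  rw [bfun, himg, Finset.card_image_of_injective _ efun_strictMono.injective,
    show (univ.filter (fun l : Fin J.card => l ≤ k)) = Iic k by ext l; simp, Fin.card_Iic]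

lemma efun_le_of_bfun {k : Fin J.card} {i : ℕ} (h : (k : ℕ) + 1 ≤ bfun J i) : efun J k ≤ i := by
  classical
  by_contra hlt
  push_neg at hlt
  have hsub : J.filter (· ≤ i) ⊆ (univ.filter (fun l : Fin J.card => l < k)).image (efun J) := by
    intro x hx
    simp only [Finset.mem_filter] at hx
    obtain ⟨l, rfl⟩ : ∃ l, efun J l = x := by
      have : x ∈ Set.range (J.orderEmbOfFin rfl) := by rw [Finset.range_orderEmbOfFin]; exact hx.1
      exact this
    simp only [Finset.mem_image, Finset.mem_filter, Finset.mem_univ, true_and]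
    exact ⟨l, efun_strictMono.lt_iff_lt.mp (lt_of_le_of_lt hx.2 hlt), rfl⟩
  have := Finset.card_le_card hsub
  rw [Finset.card_image_of_injective _ efun_strictMono.injective,
    show (univ.filter (fun l : Fin J.card => l < k)) = Iio k by ext l; simp, Fin.card_Iio] at this
  have : bfun J i ≤ (k:ℕ) := this
  omega


variable {m : ℕ} {J : Finset ℕ}
def Bmap (m : ℕ) (J : Finset ℕ) (i : Fin m) : Fin (J.card + 1) :=
  ⟨bfun J (i : ℕ), Nat.lt_succ_of_le (bfun_le _)⟩

lemma efun_lt (hm : 0 < m) (hJ : J ⊆ Finset.Icc 1 (m-1)) (k : Fin J.card) : efun J k < m := by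
  have := hJ (efun_mem k); simp only [Finset.mem_Icc] at this; omega

lemma efun_pos (hJ : J ⊆ Finset.Icc 1 (m-1)) (k : Fin J.card) : 1 ≤ efun J k := by
  have := hJ (efun_mem k); simp only [Finset.mem_Icc] at this; omega

noncomputable def sfun (hm : 0 < m) (hJ : J ⊆ Finset.Icc 1 (m-1)) : Fin (J.card + 1) → Fin m :=
  Fin.cases ⟨0, hm⟩ (fun k => ⟨efun J k, efun_lt hm hJ k⟩)

lemma Bmap_sfun (hm : 0 < m) (hJ : J ⊆ Finset.Icc 1 (m-1)) (s : Fin (J.card + 1)) :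
    Bmap m J (sfun hm hJ s) = s := by
  induction s using Fin.cases with
  | zero => exact Fin.ext (by simp [sfun, Bmap, bfun_zero hJ])
  | succ k => exact Fin.ext (by simp [sfun, Bmap, bfun_efun])

lemma sfun_Bmap_le (hm : 0 < m) (hJ : J ⊆ Finset.Icc 1 (m-1)) (i : Fin m) :
    (sfun hm hJ (Bmap m J i) : ℕ) ≤ (i : ℕ) := by
  rcases h : (Bmap m J i) with ⟨bv, hbv⟩
  have hb : bfun J (i:ℕ) = bv := congrArg Fin.val h
  rcases bv with _ | k
  · simp [sfun]
  · have hk : k < J.card := by omega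
    have : (⟨k+1, hbv⟩ : Fin (J.card+1)) = Fin.succ ⟨k, hk⟩ := rfl
    rw [this]
    simp only [sfun, Fin.cases_succ]
    exact efun_le_of_bfun (show k + 1 ≤ bfun J (i:ℕ) by omega)

lemma no_asc_between (hm : 0 < m) (hJ : J ⊆ Finset.Icc 1 (m-1)) (i : Fin m)
    (j : ℕ) (hj : j ∈ J) : ¬((sfun hm hJ (Bmap m J i) : ℕ) < j ∧ j ≤ (i:ℕ)) := by
  classical
  rintro ⟨h1, h2⟩
  set a := (sfun hm hJ (Bmap m J i) : ℕ)
  have hba : bfun J a = bfun J (i:ℕ) := congrArg Fin.val (Bmap_sfun hm hJ (Bmap m J i))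
  have hsub : insert j (J.filter (· ≤ a)) ⊆ J.filter (· ≤ (i:ℕ)) := by
    intro x hx
    rcases Finset.mem_insert.mp hx with rfl | hx
    · exact Finset.mem_filter.mpr ⟨hj, h2⟩
    · have := Finset.mem_filter.mp hx
      exact Finset.mem_filter.mpr ⟨this.1, by omega⟩
  have hcard := Finset.card_le_card hsub
  rw [Finset.card_insert_of_notMem (fun hx => by have := (Finset.mem_filter.mp hx).2; omega)] at hcard
  change bfun J a + 1 ≤ bfun J (i:ℕ) at hcard
  omega


end CQSym

namespace CQSym
variable {m : ℕ} {J : Finset ℕ}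

lemma card_smono (t r : ℕ) :
    Nat.card {v : Fin t → ℕ+ // StrictMono v ∧ ∀ s, (v s : ℕ) ≤ r} = r.choose t := by
  classical
  have e1 : {v : Fin t → ℕ+ // StrictMono v ∧ ∀ s, (v s : ℕ) ≤ r} ≃
      {v : Fin t → Fin r // StrictMono v} :=
    { toFun := fun v => ⟨fun s => ⟨(v.1 s : ℕ) - 1, by
          have h1 : 0 < ((v.1 s : ℕ+) : ℕ) := (v.1 s).2
          have h2 : ((v.1 s : ℕ+) : ℕ) ≤ r := v.2.2 s
          omega⟩, by
        intro a b hab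
        have hlt : ((v.1 a : ℕ+) : ℕ) < ((v.1 b : ℕ+) : ℕ) := v.2.1 hab
        have h1 : 0 < ((v.1 a : ℕ+) : ℕ) := (v.1 a).2
        simp only [Fin.mk_lt_mk]; omega⟩
      invFun := fun u => ⟨fun s => ⟨(u.1 s : ℕ) + 1, Nat.succ_pos _⟩, by
        refine ⟨fun a b hab => ?_, fun s => ?_⟩
        · have hlt : (u.1 a : ℕ) < (u.1 b : ℕ) := u.2 hab
          exact (PNat.mk_lt_mk _ _ _ _).mpr (by omega)
        · have := (u.1 s).2
          show (u.1 s : ℕ) + 1 ≤ r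
          omega⟩
      left_inv := fun v => by
        apply Subtype.ext; funext s
        apply PNat.coe_injective
        have h1 : 0 < ((v.1 s : ℕ+) : ℕ) := (v.1 s).2
        show ((v.1 s : ℕ) - 1) + 1 = _
        omega
      right_inv := fun u => by
        apply Subtype.ext; funext s
        apply Fin.ext
        show ((u.1 s : ℕ) + 1) - 1 = _
        omega }
  let Ψ : {s : Finset (Fin r) // s.card = t} → {v : Fin t → Fin r // StrictMono v} :=
    fun s => ⟨fun k => s.1.orderEmbOfFin s.2 k, (s.1.orderEmbOfFin s.2).strictMono⟩
  have hbij : Function.Bijective Ψ := by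
    constructor
    · intro s s' h
      have h' : (fun k => s.1.orderEmbOfFin s.2 k) = (fun k => s'.1.orderEmbOfFin s'.2 k) :=
        congrArg Subtype.val h
      have hr : (s.1 : Set (Fin r)) = (s'.1 : Set (Fin r)) := by
        rw [← Finset.range_orderEmbOfFin s.1 s.2, ← Finset.range_orderEmbOfFin s'.1 s'.2]
        exact congrArg Set.range h'
      exact Subtype.ext (Finset.coe_injective hr)
    · intro v
      refine ⟨⟨Finset.univ.image v.1, ?_⟩, ?_⟩
      · rw [Finset.card_image_of_injective _ v.2.injective, Finset.card_univ, Fintype.card_fin]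
      · apply Subtype.ext; funext k
        exact (congrFun (Finset.orderEmbOfFin_unique _
          (fun x => Finset.mem_image_of_mem _ (Finset.mem_univ x)) v.2) k).symm
  rw [Nat.card_congr (e1.trans (Equiv.ofBijective Ψ hbij).symm), Nat.card_eq_fintype_card,
    Fintype.card_finset_len, Fintype.card_fin]


lemma asc_comp (v : Fin (J.card+1) → ℕ+) (hv : StrictMono v) :
    Asc m J (fun i => v (Bmap m J i)) := by
  constructor
  · intro i i' hii'
    exact hv.monotone (show Bmap m J i ≤ Bmap m J i' from bfun_mono hii')
  · intro i hi
    have hrot : finRotate m i = ⟨(i:ℕ)+1, hi⟩ := Fin.ext (val_finRotate i hi)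
    show ((i:ℕ)+1 ∈ J ↔ v (Bmap m J i) < v (Bmap m J (finRotate m i)))
    rw [hrot]
    have hb : bfun J ((i:ℕ)+1) = bfun J (i:ℕ) + (if (i:ℕ)+1 ∈ J then 1 else 0) := bfun_succ _
    rcases em ((i:ℕ)+1 ∈ J) with h | h
    · rw [if_pos h] at hb
      refine iff_of_true h (hv (show Bmap m J i < Bmap m J ⟨(i:ℕ)+1, hi⟩ by
        simp only [Bmap, Fin.mk_lt_mk, Fin.val_mk]; omega))
    · rw [if_neg h] at hb
      have heq : Bmap m J ⟨(i:ℕ)+1, hi⟩ = Bmap m J i := by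
        simp only [Bmap, Fin.mk.injEq, Fin.val_mk]; omega
      exact iff_of_false h (heq ▸ lt_irrefl _)

lemma card_words (hm : 0 < m) (hJ : J ⊆ Finset.Icc 1 (m-1)) (r : ℕ) :
    Nat.card {w : Fin m → ℕ+ // Asc m J w ∧ ∀ i, (w i : ℕ) ≤ r} = r.choose (J.card + 1) := by
  classical
  rw [← card_smono (J.card + 1) r]
  apply Nat.card_congr
  symm
  apply Equiv.ofBijective (f := fun (v : {v : Fin (J.card+1) → ℕ+ // StrictMono v ∧ ∀ s, (v s : ℕ) ≤ r}) =>
    (⟨fun i => v.1 (Bmap m J i), asc_comp v.1 v.2.1, fun i => v.2.2 _⟩ :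
      {w : Fin m → ℕ+ // Asc m J w ∧ ∀ i, (w i : ℕ) ≤ r}))
  constructor
  · intro v v' hvv'
    have h' : ∀ i, v.1 (Bmap m J i) = v'.1 (Bmap m J i) := fun i =>
      congrFun (congrArg Subtype.val hvv') i
    apply Subtype.ext; funext s
    have := h' (sfun hm hJ s)
    rwa [Bmap_sfun hm hJ s] at this
  · rintro ⟨w, hw, hwr⟩
    refine ⟨⟨fun s => w (sfun hm hJ s), ⟨?_, fun s => hwr _⟩⟩, ?_⟩
    · -- StrictMono
      intro s s' hss'
      rcases Fin.eq_zero_or_eq_succ s' with rfl | ⟨k, rfl⟩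
      · exact absurd hss' (Fin.not_lt_zero s)
      · have hj1 : 1 ≤ efun J k := efun_pos hJ k
        have hj2 : efun J k < m := efun_lt hm hJ k
        have key := (asc_step hw (efun J k - 1) (by omega)).mp
        have hfix : (⟨efun J k - 1 + 1, by omega⟩ : Fin m) = ⟨efun J k, hj2⟩ :=
          Fin.ext (show efun J k - 1 + 1 = efun J k by omega)
        rw [hfix] at key
        have hmem : efun J k - 1 + 1 ∈ J := by
          rw [show efun J k - 1 + 1 = efun J k by omega]; exact efun_mem k
        have hlt : w ⟨efun J k - 1, by omega⟩ < w ⟨efun J k, hj2⟩ := key hmem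
        have hle : w (sfun hm hJ s) ≤ w ⟨efun J k - 1, by omega⟩ := by
          apply hw.1
          rcases Fin.eq_zero_or_eq_succ s with rfl | ⟨l, rfl⟩
          · show ((sfun hm hJ 0 : Fin m) : ℕ) ≤ _
            simp only [sfun, Fin.cases_zero]
            exact Nat.zero_le _
          · have hlk : l < k := Fin.succ_lt_succ_iff.mp hss'
            have : efun J l < efun J k := efun_strictMono hlk
            show ((sfun hm hJ l.succ : Fin m) : ℕ) ≤ efun J k - 1
            simp only [sfun, Fin.cases_succ]
            omega
        calc w (sfun hm hJ s) ≤ w ⟨efun J k - 1, by omega⟩ := hle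
          _ < w ⟨efun J k, hj2⟩ := hlt
          _ = w (sfun hm hJ k.succ) := by
            rw [show sfun hm hJ k.succ = ⟨efun J k, hj2⟩ from
              Fin.ext (by simp only [sfun, Fin.cases_succ])]
    · -- maps back to w
      apply Subtype.ext; funext i
      show w (sfun hm hJ (Bmap m J i)) = w i
      set a := ((sfun hm hJ (Bmap m J i)) : ℕ) with ha
      have hale : a ≤ (i : ℕ) := sfun_Bmap_le hm hJ i
      have hflat := flat hw a ((i:ℕ) - a) (by omega : a + ((i:ℕ) - a) < m)
        (fun j hj hcontra => no_asc_between hm hJ i j hj ⟨hcontra.1, by omega⟩)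
      have h1 : (⟨a, by omega⟩ : Fin m) = sfun hm hJ (Bmap m J i) := Fin.ext rfl
      have h2 : (⟨a + ((i:ℕ) - a), by omega⟩ : Fin m) = i := Fin.ext (show a + ((i:ℕ) - a) = (i:ℕ) by omega)
      rw [h1, h2] at hflat
      exact hflat


lemma card_fiber {α β : Type*} [Finite α] (f : α → β) (s : Finset β) (h : ∀ a, f a ∈ s) :
    Nat.card α = ∑ b ∈ s, Nat.card {a // f a = b} := by
  classical
  cases nonempty_fintype α
  rw [Nat.card_eq_fintype_card, ← Finset.card_univ,
    Finset.card_eq_sum_card_fiberwise (fun a _ => h a)]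
  refine Finset.sum_congr rfl fun b _ => ?_
  rw [Nat.card_eq_fintype_card, Fintype.card_subtype]

lemma card_split {α : Type*} [Finite α] (q : α → Prop) :
    Nat.card α = Nat.card {x : α // q x} + Nat.card {x : α // ¬ q x} := by
  classical
  rw [← Nat.card_sum]
  exact Nat.card_congr (Equiv.sumCompl q).symm

lemma finite_words {m r : ℕ} {P : (Fin m → ℕ+) → Prop} (h : ∀ w, P w → ∀ i, (w i : ℕ) ≤ r) :
    Finite {w : Fin m → ℕ+ // P w} := by
  have : Finite {w : Fin m → ℕ+ // ∀ i, (w i : ℕ) ≤ r} := by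
    refine Finite.of_injective
      (fun w => (fun i => (⟨(w.1 i : ℕ) - 1, by have := w.2 i; omega⟩ : Fin r.succ) : Fin m → Fin r.succ))
      ?_
    intro a b hab
    apply Subtype.ext; funext i
    have h1 : ((a.1 i : ℕ) - 1 : ℕ) = (b.1 i : ℕ) - 1 := congrArg Fin.val (congrFun hab i)
    have h2 : 0 < (a.1 i : ℕ) := (a.1 i).2
    have h3 : 0 < (b.1 i : ℕ) := (b.1 i).2
    exact PNat.coe_injective (by omega)
  refine Finite.of_injective (fun w => (⟨w.1, fun i => h w.1 w.2 i⟩ : {w : Fin m → ℕ+ // ∀ i, (w i : ℕ) ≤ r})) ?_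
  intro a b hab
  have hv := congrArg Subtype.val hab
  exact Subtype.ext hv

/-- bound on all values of a finsupp's support -/
def dbound (d : ℕ+ →₀ ℕ) : ℕ := d.support.sup (fun x => (x : ℕ))

lemma letters_le_left {m n : ℕ} {w : Fin m → ℕ+} {w' : Fin n → ℕ+} {d : ℕ+ →₀ ℕ}
    (hd : wt w + wt w' = d) (i : Fin m) : (w i : ℕ) ≤ dbound d := by
  have h1 : w i ∈ (wt w).support := (mem_support_wt w (w i)).mpr ⟨i, rfl⟩
  have h2 : w i ∈ d.support := by
    rw [Finsupp.mem_support_iff] at h1 ⊢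
    rw [← hd, Finsupp.add_apply]
    omega
  exact Finset.le_sup (f := fun x : ℕ+ => (x : ℕ)) h2

lemma letters_le_right {m n : ℕ} {w : Fin m → ℕ+} {w' : Fin n → ℕ+} {d : ℕ+ →₀ ℕ}
    (hd : wt w + wt w' = d) (i : Fin n) : (w' i : ℕ) ≤ dbound d := by
  have h1 : w' i ∈ (wt w').support := (mem_support_wt w' (w' i)).mpr ⟨i, rfl⟩
  have h2 : w' i ∈ d.support := by
    rw [Finsupp.mem_support_iff] at h1 ⊢
    rw [← hd, Finsupp.add_apply]
    omega
  exact Finset.le_sup (f := fun x : ℕ+ => (x : ℕ)) h2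

lemma mem_support_pair {m n : ℕ} {w : Fin m → ℕ+} {w' : Fin n → ℕ+} {x : ℕ+} :
    x ∈ (wt w + wt w').support ↔ (∃ i, w i = x) ∨ (∃ i, w' i = x) := by
  rw [Finsupp.mem_support_iff, Finsupp.add_apply]
  rw [← mem_support_wt, ← mem_support_wt, Finsupp.mem_support_iff, Finsupp.mem_support_iff]
  omega

instance pair_finite (m n : ℕ) (J K : Finset ℕ) (d : ℕ+ →₀ ℕ) :
    Finite {p : (Fin m → ℕ+) × (Fin n → ℕ+) // Asc m J p.1 ∧ Asc n K p.2 ∧ wt p.1 + wt p.2 = d} := by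
  have F1 : Finite {w : Fin m → ℕ+ // ∀ i, (w i : ℕ) ≤ dbound d} :=
    finite_words (fun w hw => hw)
  have F2 : Finite {w : Fin n → ℕ+ // ∀ i, (w i : ℕ) ≤ dbound d} :=
    finite_words (fun w hw => hw)
  refine Finite.of_injective (fun p =>
    ((⟨p.1.1, fun i => letters_le_left p.2.2.2 i⟩ : {w : Fin m → ℕ+ // ∀ i, (w i : ℕ) ≤ dbound d}),
     (⟨p.1.2, fun i => letters_le_right p.2.2.2 i⟩ : {w : Fin n → ℕ+ // ∀ i, (w i : ℕ) ≤ dbound d}))) ?_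
  rintro ⟨⟨a1, a2⟩, ha⟩ ⟨⟨b1, b2⟩, hb⟩ hab
  simp only [Prod.mk.injEq, Subtype.mk.injEq] at hab
  exact Subtype.ext (Prod.ext hab.1 hab.2)

instance pair_finite_bdd (m n : ℕ) (J K : Finset ℕ) (r : ℕ) (Q : (Fin m → ℕ+) × (Fin n → ℕ+) → Prop) :
    Finite {p : (Fin m → ℕ+) × (Fin n → ℕ+) //
      (Asc m J p.1 ∧ Asc n K p.2) ∧ ((∀ i, (p.1 i : ℕ) ≤ r) ∧ (∀ i, (p.2 i : ℕ) ≤ r)) ∧ Q p} := by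
  have F1 : Finite {w : Fin m → ℕ+ // ∀ i, (w i : ℕ) ≤ r} := finite_words (fun w hw => hw)
  have F2 : Finite {w : Fin n → ℕ+ // ∀ i, (w i : ℕ) ≤ r} := finite_words (fun w hw => hw)
  refine Finite.of_injective (fun p =>
    ((⟨p.1.1, p.2.2.1.1⟩ : {w : Fin m → ℕ+ // ∀ i, (w i : ℕ) ≤ r}),
     (⟨p.1.2, p.2.2.1.2⟩ : {w : Fin n → ℕ+ // ∀ i, (w i : ℕ) ≤ r}))) ?_
  rintro ⟨⟨a1, a2⟩, ha⟩ ⟨⟨b1, b2⟩, hb⟩ hab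
  simp only [Prod.mk.injEq, Subtype.mk.injEq] at hab
  exact Subtype.ext (Prod.ext hab.1 hab.2)


lemma coeff_Mqsym (m : ℕ) (J : Finset ℕ) (d : ℕ+ →₀ ℕ) :
    MvPowerSeries.coeff d (Mqsym m J) =
      (Nat.card {w : Fin m → ℕ+ // Asc m J w ∧ wt w = d} : ℤ) := by
  show (Nat.card _ : ℤ) = _
  exact congrArg _ (Nat.card_congr (Equiv.subtypeEquivRight fun w => by
    unfold Asc; tauto))

lemma coeff_mul_M (m n : ℕ) (J K : Finset ℕ) (d : ℕ+ →₀ ℕ) :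
    MvPowerSeries.coeff d (Mqsym m J * Mqsym n K) =
      (Nat.card {p : (Fin m → ℕ+) × (Fin n → ℕ+) //
        Asc m J p.1 ∧ Asc n K p.2 ∧ wt p.1 + wt p.2 = d} : ℤ) := by
  classical
  rw [MvPowerSeries.coeff_mul]
  rw [card_fiber (f := fun p : {p : (Fin m → ℕ+) × (Fin n → ℕ+) //
        Asc m J p.1 ∧ Asc n K p.2 ∧ wt p.1 + wt p.2 = d} => (wt p.1.1, wt p.1.2))
      (s := Finset.HasAntidiagonal.antidiagonal d) (fun p => Finset.HasAntidiagonal.mem_antidiagonal.mpr p.2.2.2)]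
  push_cast
  refine Finset.sum_congr rfl fun b hb => ?_
  have hbd : b.1 + b.2 = d := Finset.HasAntidiagonal.mem_antidiagonal.mp hb
  rw [coeff_Mqsym, coeff_Mqsym, ← Nat.cast_mul, ← Nat.card_prod]
  congr 1
  refine Nat.card_congr (Equiv.symm ?_)
  exact {
    toFun := fun p => (⟨p.1.1.1, p.1.2.1, congrArg Prod.fst p.2⟩,
                       ⟨p.1.1.2, p.1.2.2.1, congrArg Prod.snd p.2⟩)
    invFun := fun q => ⟨⟨(q.1.1, q.2.1), q.1.2.1, q.2.2.1, by
        rw [q.1.2.2, q.2.2.2]; exact hbd⟩, by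
      apply Prod.ext
      · exact q.1.2.2
      · exact q.2.2.2⟩
    left_inv := fun p => by apply Subtype.ext; apply Subtype.ext; rfl
    right_inv := fun q => by
      apply Prod.ext <;> apply Subtype.ext <;> rfl }

/-- boundedness of a pair of words -/
def Bdd2 {m n : ℕ} (r : ℕ) (p : (Fin m → ℕ+) × (Fin n → ℕ+)) : Prop :=
  (∀ i, (p.1 i : ℕ) ≤ r) ∧ (∀ i, (p.2 i : ℕ) ≤ r)

lemma maxCond_iff {m n : ℕ} (hm : 0 < m) (p : (Fin m → ℕ+) × (Fin n → ℕ+)) (r : ℕ) :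
    (∃ x ∈ (wt p.1 + wt p.2).support, (∀ y ∈ (wt p.1 + wt p.2).support, y ≤ x) ∧ (x : ℕ) = r)
      ↔ Bdd2 r p ∧ ¬ Bdd2 (r-1) p := by
  constructor
  · rintro ⟨x, hxmem, hxmax, hxr⟩
    have hrpos : 0 < r := hxr ▸ x.2
    have hb1 : ∀ i, (p.1 i : ℕ) ≤ r := fun i => by
      have : p.1 i ≤ x := hxmax _ (mem_support_pair.mpr (Or.inl ⟨i, rfl⟩))
      calc (p.1 i : ℕ) ≤ (x : ℕ) := this
        _ = r := hxr
    have hb2 : ∀ i, (p.2 i : ℕ) ≤ r := fun i => by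
      have : p.2 i ≤ x := hxmax _ (mem_support_pair.mpr (Or.inr ⟨i, rfl⟩))
      calc (p.2 i : ℕ) ≤ (x : ℕ) := this
        _ = r := hxr
    refine ⟨⟨hb1, hb2⟩, ?_⟩
    rintro ⟨hc1, hc2⟩
    rcases mem_support_pair.mp hxmem with ⟨i, hi⟩ | ⟨i, hi⟩
    · have := hc1 i; rw [hi] at this; omega
    · have := hc2 i; rw [hi] at this; omega
  · rintro ⟨⟨hb1, hb2⟩, hnb⟩
    have : (∃ i, r - 1 < (p.1 i : ℕ)) ∨ (∃ i, r - 1 < (p.2 i : ℕ)) := by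
      by_contra hcon
      push_neg at hcon
      exact hnb ⟨fun i => by have := hcon.1 i; omega, fun i => by have := hcon.2 i; omega⟩
    rcases this with ⟨i, hi⟩ | ⟨i, hi⟩
    · refine ⟨p.1 i, mem_support_pair.mpr (Or.inl ⟨i, rfl⟩), fun y hy => ?_, by have := hb1 i; omega⟩
      rcases mem_support_pair.mp hy with ⟨i', hi'⟩ | ⟨i', hi'⟩
      · have := hb1 i'; rw [hi'] at this
        exact PNat.coe_le_coe _ _ |>.mp (by omega)
      · have := hb2 i'; rw [hi'] at this
        exact PNat.coe_le_coe _ _ |>.mp (by omega)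
    · refine ⟨p.2 i, mem_support_pair.mpr (Or.inr ⟨i, rfl⟩), fun y hy => ?_, by have := hb2 i; omega⟩
      rcases mem_support_pair.mp hy with ⟨i', hi'⟩ | ⟨i', hi'⟩
      · have := hb1 i'; rw [hi'] at this
        exact PNat.coe_le_coe _ _ |>.mp (by omega)
      · have := hb2 i'; rw [hi'] at this
        exact PNat.coe_le_coe _ _ |>.mp (by omega)


lemma card_U {m n : ℕ} (hm : 0 < m) (hn : 0 < n) {J K : Finset ℕ}
    (hJ : J ⊆ Finset.Icc 1 (m-1)) (hK : K ⊆ Finset.Icc 1 (n-1)) (r : ℕ) :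
    Nat.card {p : (Fin m → ℕ+) × (Fin n → ℕ+) //
        (Asc m J p.1 ∧ Asc n K p.2) ∧ Bdd2 r p} =
      r.choose (J.card + 1) * r.choose (K.card + 1) := by
  rw [← card_words hm hJ r, ← card_words hn hK r, ← Nat.card_prod]
  apply Nat.card_congr
  exact {
    toFun := fun p => (⟨p.1.1, p.2.1.1, p.2.2.1⟩, ⟨p.1.2, p.2.1.2, p.2.2.2⟩)
    invFun := fun q => ⟨(q.1.1, q.2.1), ⟨q.1.2.1, q.2.2.1⟩, ⟨q.1.2.2, q.2.2.2⟩⟩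
    left_inv := fun p => by apply Subtype.ext; rfl
    right_inv := fun q => by apply Prod.ext <;> apply Subtype.ext <;> rfl }

lemma card_T {m n : ℕ} (hm : 0 < m) (hn : 0 < n) {J K : Finset ℕ}
    (hJ : J ⊆ Finset.Icc 1 (m-1)) (hK : K ⊆ Finset.Icc 1 (n-1)) (r : ℕ) :
    (Nat.card {p : (Fin m → ℕ+) × (Fin n → ℕ+) //
        (Asc m J p.1 ∧ Asc n K p.2) ∧ Bdd2 r p ∧ ¬ Bdd2 (r-1) p} : ℤ) =
      (r.choose (J.card + 1) * r.choose (K.card + 1) : ℕ) -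
        ((r-1).choose (J.card + 1) * (r-1).choose (K.card + 1) : ℕ) := by
  classical
  have hfinU : Finite {p : (Fin m → ℕ+) × (Fin n → ℕ+) //
      (Asc m J p.1 ∧ Asc n K p.2) ∧ Bdd2 r p} := by
    have F1 : Finite {w : Fin m → ℕ+ // ∀ i, (w i : ℕ) ≤ r} := finite_words (fun w hw => hw)
    have F2 : Finite {w : Fin n → ℕ+ // ∀ i, (w i : ℕ) ≤ r} := finite_words (fun w hw => hw)
    refine Finite.of_injective (fun p =>
      ((⟨p.1.1, p.2.2.1⟩ : {w : Fin m → ℕ+ // ∀ i, (w i : ℕ) ≤ r}),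
       (⟨p.1.2, p.2.2.2⟩ : {w : Fin n → ℕ+ // ∀ i, (w i : ℕ) ≤ r}))) ?_
    rintro ⟨⟨a1, a2⟩, ha⟩ ⟨⟨b1, b2⟩, hb⟩ hab
    simp only [Prod.mk.injEq, Subtype.mk.injEq] at hab
    exact Subtype.ext (Prod.ext hab.1 hab.2)
  have hsplit := card_split (α := {p : (Fin m → ℕ+) × (Fin n → ℕ+) //
      (Asc m J p.1 ∧ Asc n K p.2) ∧ Bdd2 r p}) (fun x => Bdd2 (r-1) x.1)
  have e1 : {x : {p : (Fin m → ℕ+) × (Fin n → ℕ+) //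
      (Asc m J p.1 ∧ Asc n K p.2) ∧ Bdd2 r p} // Bdd2 (r-1) x.1} ≃
      {p : (Fin m → ℕ+) × (Fin n → ℕ+) // (Asc m J p.1 ∧ Asc n K p.2) ∧ Bdd2 (r-1) p} :=
    { toFun := fun x => ⟨x.1.1, x.1.2.1, x.2⟩
      invFun := fun p => ⟨⟨p.1, p.2.1, ⟨fun i => le_trans (p.2.2.1 i) (by omega),
        fun i => le_trans (p.2.2.2 i) (by omega)⟩⟩, p.2.2⟩
      left_inv := fun x => by apply Subtype.ext; apply Subtype.ext; rfl
      right_inv := fun p => by apply Subtype.ext; rfl }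
  have e2 : {x : {p : (Fin m → ℕ+) × (Fin n → ℕ+) //
      (Asc m J p.1 ∧ Asc n K p.2) ∧ Bdd2 r p} // ¬ Bdd2 (r-1) x.1} ≃
      {p : (Fin m → ℕ+) × (Fin n → ℕ+) //
        (Asc m J p.1 ∧ Asc n K p.2) ∧ Bdd2 r p ∧ ¬ Bdd2 (r-1) p} :=
    { toFun := fun x => ⟨x.1.1, x.1.2.1, x.1.2.2, x.2⟩
      invFun := fun p => ⟨⟨p.1, p.2.1, p.2.2.1⟩, p.2.2.2⟩
      left_inv := fun x => by apply Subtype.ext; apply Subtype.ext; rfl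
      right_inv := fun p => by apply Subtype.ext; rfl }
  rw [Nat.card_congr e1, card_U hm hn hJ hK r, card_U hm hn hJ hK (r-1),
    Nat.card_congr e2] at hsplit
  have hmono : (r-1).choose (J.card + 1) * (r-1).choose (K.card + 1) ≤
      r.choose (J.card + 1) * r.choose (K.card + 1) :=
    Nat.mul_le_mul (Nat.choose_le_choose _ (by omega)) (Nat.choose_le_choose _ (by omega))
  push_cast [← hsplit]
  omega


lemma finite_pairs {m n : ℕ} (r : ℕ) {P : (Fin m → ℕ+) × (Fin n → ℕ+) → Prop}
    (h : ∀ p, P p → Bdd2 r p) : Finite {p : (Fin m → ℕ+) × (Fin n → ℕ+) // P p} := by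
  have F1 : Finite {w : Fin m → ℕ+ // ∀ i, (w i : ℕ) ≤ r} := finite_words (fun w hw => hw)
  have F2 : Finite {w : Fin n → ℕ+ // ∀ i, (w i : ℕ) ≤ r} := finite_words (fun w hw => hw)
  refine Finite.of_injective (fun p =>
    ((⟨p.1.1, (h p.1 p.2).1⟩ : {w : Fin m → ℕ+ // ∀ i, (w i : ℕ) ≤ r}),
     (⟨p.1.2, (h p.1 p.2).2⟩ : {w : Fin n → ℕ+ // ∀ i, (w i : ℕ) ≤ r}))) ?_
  rintro ⟨⟨a1, a2⟩, ha⟩ ⟨⟨b1, b2⟩, hb⟩ hab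
  simp only [Prod.mk.injEq, Subtype.mk.injEq] at hab
  exact Subtype.ext (Prod.ext hab.1 hab.2)

lemma finsum_eq_cardT {m n : ℕ} (hm : 0 < m) (hn : 0 < n) {J K : Finset ℕ} (r : ℕ) :
    (∑ᶠ d ∈ {d : ℕ+ →₀ ℕ | ∃ x ∈ d.support, (∀ y ∈ d.support, y ≤ x) ∧ (x : ℕ) = r},
      MvPowerSeries.coeff d (Mqsym m J * Mqsym n K)) =
    (Nat.card {p : (Fin m → ℕ+) × (Fin n → ℕ+) //
        (Asc m J p.1 ∧ Asc n K p.2) ∧ Bdd2 r p ∧ ¬ Bdd2 (r-1) p} : ℤ) := by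
  classical
  set S : Set (ℕ+ →₀ ℕ) :=
    {d : ℕ+ →₀ ℕ | ∃ x ∈ d.support, (∀ y ∈ d.support, y ≤ x) ∧ (x : ℕ) = r} with hS
  have hTfin : Finite {p : (Fin m → ℕ+) × (Fin n → ℕ+) //
      (Asc m J p.1 ∧ Asc n K p.2) ∧ Bdd2 r p ∧ ¬ Bdd2 (r-1) p} :=
    finite_pairs r (fun p hp => hp.2.1)
  set g : {p : (Fin m → ℕ+) × (Fin n → ℕ+) //
      (Asc m J p.1 ∧ Asc n K p.2) ∧ Bdd2 r p ∧ ¬ Bdd2 (r-1) p} → (ℕ+ →₀ ℕ) :=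
    fun p => wt p.1.1 + wt p.1.2 with hg
  have hgS : ∀ p, g p ∈ S := fun p => (maxCond_iff hm p.1 r).mpr ⟨p.2.2.1, p.2.2.2⟩
  have hgF : ∀ p, MvPowerSeries.coeff (g p) (Mqsym m J * Mqsym n K) ≠ 0 := by
    intro p
    rw [coeff_mul_M]
    have hfin : Finite {q : (Fin m → ℕ+) × (Fin n → ℕ+) //
        Asc m J q.1 ∧ Asc n K q.2 ∧ wt q.1 + wt q.2 = g p} := pair_finite m n J K _
    have hne : Nonempty {q : (Fin m → ℕ+) × (Fin n → ℕ+) //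
        Asc m J q.1 ∧ Asc n K q.2 ∧ wt q.1 + wt q.2 = g p} :=
      ⟨⟨p.1, p.2.1.1, p.2.1.2, rfl⟩⟩
    have hpos : 0 < Nat.card {q : (Fin m → ℕ+) × (Fin n → ℕ+) //
        Asc m J q.1 ∧ Asc n K q.2 ∧ wt q.1 + wt q.2 = g p} := Nat.card_pos
    exact_mod_cast Nat.pos_iff_ne_zero.mp hpos
  have hsub : S ∩ Function.support
      (fun d => MvPowerSeries.coeff d (Mqsym m J * Mqsym n K)) ⊆ Set.range g := by
    rintro d ⟨hdS, hdF⟩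
    have hd0 : MvPowerSeries.coeff d (Mqsym m J * Mqsym n K) ≠ 0 := hdF
    rw [coeff_mul_M] at hd0
    have hne : Nat.card {q : (Fin m → ℕ+) × (Fin n → ℕ+) //
        Asc m J q.1 ∧ Asc n K q.2 ∧ wt q.1 + wt q.2 = d} ≠ 0 := fun h => hd0 (by rw [h]; rfl)
    have hnonempty : Nonempty {q : (Fin m → ℕ+) × (Fin n → ℕ+) //
        Asc m J q.1 ∧ Asc n K q.2 ∧ wt q.1 + wt q.2 = d} := by
      by_contra hempty
      rw [not_nonempty_iff] at hempty
      exact hne Nat.card_of_isEmpty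
    obtain ⟨q⟩ := hnonempty
    have hdS' : (∃ x ∈ (wt q.1.1 + wt q.1.2).support,
        (∀ y ∈ (wt q.1.1 + wt q.1.2).support, y ≤ x) ∧ (x : ℕ) = r) := by
      rw [q.2.2.2]; exact hdS
    have hbdd := (maxCond_iff hm q.1 r).mp hdS'
    exact ⟨⟨q.1, ⟨q.2.1, q.2.2.1⟩, hbdd.1, hbdd.2⟩, q.2.2.2⟩
  have hfin : (S ∩ Function.support
      (fun d => MvPowerSeries.coeff d (Mqsym m J * Mqsym n K))).Finite :=
    (Set.finite_range g).subset hsub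
  refine (finsum_mem_inter_support
    (fun d => MvPowerSeries.coeff d (Mqsym m J * Mqsym n K)) S).symm.trans
    ((finsum_mem_eq_finite_toFinset_sum _ hfin).trans ?_)
  have hmem : ∀ p, g p ∈ hfin.toFinset := fun p => by
    rw [Set.Finite.mem_toFinset]
    exact ⟨hgS p, hgF p⟩
  rw [card_fiber g hfin.toFinset hmem]
  push_cast
  refine Finset.sum_congr rfl fun b hb => ?_
  have hbS : b ∈ S := ((Set.Finite.mem_toFinset hfin).mp hb).1
  rw [coeff_mul_M]
  refine congrArg (fun c : ℕ => (c : ℤ)) (Nat.card_congr (Equiv.symm ?_))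
  exact {
    toFun := fun x => ⟨x.1.1, x.1.2.1.1, x.1.2.1.2, x.2⟩
    invFun := fun q => ⟨⟨q.1, ⟨q.2.1, q.2.2.1⟩, by
      have hdS' : (∃ x ∈ (wt q.1.1 + wt q.1.2).support,
          (∀ y ∈ (wt q.1.1 + wt q.1.2).support, y ≤ x) ∧ (x : ℕ) = r) := by
        rw [q.2.2.2]; exact hbS
      exact (maxCond_iff hm q.1 r).mp hdS'⟩, q.2.2.2⟩
    left_inv := fun x => by apply Subtype.ext; apply Subtype.ext; rfl
    right_inv := fun q => by apply Subtype.ext; rfl }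


/-- `Ψ(M_{m,J} · M_{n,K}) = (1−q)·Σ_r C(r, |J|+1)·C(r, |K|+1)·q^r`. -/
theorem psi_Mqsym_product (m n : ℕ) (hm : 0 < m) (hn : 0 < n)
    (J K : Finset ℕ) (hJ : J ⊆ Finset.Icc 1 (m - 1))
    (hK : K ⊆ Finset.Icc 1 (n - 1)) :
    psi (Mqsym m J * Mqsym n K)
      = (1 - PowerSeries.X) *
          PowerSeries.mk
            (fun r => ((r.choose (J.card + 1) * r.choose (K.card + 1) : ℕ) : ℤ)) := by

  apply PowerSeries.ext
  intro r
  simp only [psi]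
  rw [PowerSeries.coeff_mk, sub_mul, one_mul, map_sub]
  rcases r with _ | r'
  · rw [if_pos rfl]
    have hX : PowerSeries.coeff 0 (PowerSeries.X *
        PowerSeries.mk (fun r => ((r.choose (J.card + 1) * r.choose (K.card + 1) : ℕ) : ℤ))) = 0 := by
      rw [PowerSeries.coeff_zero_eq_constantCoeff, map_mul, PowerSeries.constantCoeff_X, zero_mul]
    rw [hX, PowerSeries.coeff_mk]
    have hempty : IsEmpty {p : (Fin m → ℕ+) × (Fin n → ℕ+) //
        Asc m J p.1 ∧ Asc n K p.2 ∧ wt p.1 + wt p.2 = (0 : ℕ+ →₀ ℕ)} := by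
      constructor
      rintro ⟨⟨w, w'⟩, hA, hB, hw⟩
      have h0 : (wt w + wt w') (w ⟨0, hm⟩) = 0 := by rw [hw]; rfl
      rw [Finsupp.add_apply, wt_apply] at h0
      have hmem : (⟨0, hm⟩ : Fin m) ∈ univ.filter (fun i => w i = w ⟨0, hm⟩) := by
        simp
      have := Finset.card_pos.mpr ⟨_, hmem⟩
      omega
    rw [coeff_mul_M, Nat.card_of_isEmpty]
    have : (0 : ℕ).choose (J.card + 1) = 0 := Nat.choose_eq_zero_of_lt (by omega)
    rw [this]
    simp
  · rw [if_neg (by omega)]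
    rw [PowerSeries.coeff_mk, PowerSeries.coeff_succ_X_mul, PowerSeries.coeff_mk]
    rw [finsum_eq_cardT hm hn (r' + 1), card_T hm hn hJ hK (r' + 1)]
    simp only [Nat.add_sub_cancel]

end CQSym
end

section
/- Let A, B be disjoint finite sets of integers with |A| = m, |B| = n, and u ∈ S_A, v ∈ S_B with des(u) = i, des(v) = j. Then Σ_{w ∈ u ⧢ v} q^{des(w)} = (1−q)^{m+n+1}·Σ_r C(r+m−i, m)·C(r+n−j, n)·q^r as formal power series in q. -/
open Finset

namespace CQSym

lemma finRotate_mk {N : ℕ} (i : Fin N) (h : (i : ℕ) + 1 < N) :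
    finRotate N i = ⟨(i : ℕ) + 1, h⟩ := by
  rcases N with _ | n
  · exact i.elim0
  · have hne : i ≠ Fin.last n := by
      intro he; rw [he] at h; simp [Fin.last] at h
    apply Fin.ext
    rw [coe_finRotate_of_ne_last hne]

lemma card_filter_val_lt (N b : ℕ) (hb : b ≤ N) :
    (univ.filter fun p : Fin N => (p : ℕ) < b).card = b := by
  classical
  have : (univ.filter fun p : Fin N => (p : ℕ) < b).card = (Finset.range b).card := by
    apply Finset.card_bij' (fun (p : Fin N) _ => (p : ℕ))
      (fun c hc => (⟨c, lt_of_lt_of_le (Finset.mem_range.1 hc) hb⟩ : Fin N))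
    case hi => intro p hp; exact Finset.mem_range.2 (Finset.mem_filter.1 hp).2
    case hj => intro c hc; exact Finset.mem_filter.2 ⟨Finset.mem_univ _, Finset.mem_range.1 hc⟩
    case left_inv => intro p hp; rfl
    case right_inv => intro c hc; rfl
  rw [this, Finset.card_range]

lemma card_filter_Ico {N : ℕ} (a b : ℕ) (hb : b ≤ N) :
    (univ.filter fun p : Fin N => a ≤ (p : ℕ) ∧ (p : ℕ) < b).card = b - a := by
  classical
  rcases le_or_gt a b with hab | hab
  · have hset : (univ.filter fun p : Fin N => a ≤ (p : ℕ) ∧ (p : ℕ) < b)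
        = (univ.filter fun p : Fin N => (p : ℕ) < b) \ (univ.filter fun p : Fin N => (p : ℕ) < a) := by
      ext p; simp only [mem_filter, mem_sdiff, mem_univ, true_and]; omega
    rw [hset, card_sdiff_of_subset, card_filter_val_lt N b hb, card_filter_val_lt N a (le_trans hab hb)]
    intro p hp; simp only [mem_filter, mem_univ, true_and] at hp ⊢; omega
  · have hset : (univ.filter fun p : Fin N => a ≤ (p : ℕ) ∧ (p : ℕ) < b) = ∅ := by
      ext p; simp only [mem_filter, mem_univ, true_and, notMem_empty, iff_false]; omega
    rw [hset]; simp; omega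

/-- Key "steps" lemma: if `f` weakly increases at each adjacent pair and strictly
increases at the pairs indexed by `E`, then going from `t` to `s` it gains at least
the number of elements of `E` in `[t, s)`. -/
lemma steps {N : ℕ} (E : Finset (Fin N)) (f : Fin N → ℕ)
    (hf : ∀ (s : ℕ) (hs : s + 1 < N),
      f ⟨s, Nat.lt_of_succ_lt hs⟩ + (if (⟨s, Nat.lt_of_succ_lt hs⟩ : Fin N) ∈ E then 1 else 0)
        ≤ f ⟨s + 1, hs⟩) :
    ∀ t s : Fin N, t ≤ s → f t + (E.filter fun p => t ≤ p ∧ p < s).card ≤ f s := by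
  classical
  rcases N with _ | n
  · exact fun t => t.elim0
  intro t s
  induction s using Fin.induction with
  | zero =>
    intro h
    have ht : t = 0 := le_antisymm h (Fin.zero_le t)
    subst ht
    have : (E.filter fun p => (0 : Fin (n+1)) ≤ p ∧ p < 0) = ∅ := by
      ext p; simp [Fin.not_lt_zero]
    simp [this]
  | succ s ih =>
    intro hts
    rcases eq_or_lt_of_le hts with he | hlt
    · have : (E.filter fun p => t ≤ p ∧ p < s.succ) = ∅ := by
        ext p; simp only [mem_filter, notMem_empty, iff_false]
        rintro ⟨-, h1, h2⟩
        rw [he] at h1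
        exact absurd h2 (not_lt.2 h1)
      rw [this, card_empty, Nat.add_zero, he]
    · have hts' : t ≤ s.castSucc := by
        rw [Fin.le_def]; rw [Fin.lt_def] at hlt
        simp [Fin.val_succ] at hlt ⊢; omega
      have hsplit : (E.filter fun p => t ≤ p ∧ p < s.succ)
          = (E.filter fun p => t ≤ p ∧ p < s.castSucc) ∪ (E.filter fun p => p = s.castSucc) := by
        rw [← filter_or]
        apply filter_congr
        intro p _
        simp only [Fin.lt_def, Fin.le_def, Fin.val_succ, Fin.coe_castSucc] at *
        constructor
        · rintro ⟨h1, h2⟩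
          rcases lt_or_eq_of_le (Nat.lt_succ_iff.1 h2) with h3 | h3
          · exact Or.inl ⟨h1, h3⟩
          · exact Or.inr (Fin.ext h3)
        · rintro (⟨h1, h2⟩ | h1)
          · exact ⟨h1, by omega⟩
          · subst h1; exact ⟨hts', by simp⟩
      have hdisj : Disjoint (E.filter fun p => t ≤ p ∧ p < s.castSucc)
          (E.filter fun p => p = s.castSucc) := by
        rw [Finset.disjoint_left]
        intro p hp hq
        rw [mem_filter] at hp hq
        exact absurd hq.2 (ne_of_lt hp.2.2)
      rw [hsplit, Finset.card_union_of_disjoint hdisj]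
      have h1 := ih hts'
      have hs2 : (s : ℕ) + 1 < n + 1 := by omega
      have h2 := hf (s : ℕ) hs2
      have e1 : (⟨(s : ℕ), Nat.lt_of_succ_lt hs2⟩ : Fin (n+1)) = s.castSucc := by
        apply Fin.ext; rfl
      have e2 : (⟨(s : ℕ) + 1, hs2⟩ : Fin (n+1)) = s.succ := by apply Fin.ext; rfl
      rw [e1, e2] at h2
      have hcard : (E.filter fun p => p = s.castSucc).card = if s.castSucc ∈ E then 1 else 0 := by
        rw [Finset.filter_eq']; split <;> simp
      rw [hcard]
      by_cases hmem : s.castSucc ∈ E <;> simp [hmem] at h2 ⊢ <;> omega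



section Aux

variable {N : ℕ}

/-- The set of descent positions. -/
def DesSet (x : Fin N → ℤ) : Finset (Fin N) :=
  univ.filter fun i => (i : ℕ) + 1 < N ∧ x (finRotate N i) < x i

lemma des_eq (x : Fin N → ℤ) : des x = (DesSet x).card := rfl

lemma mem_DesSet_iff {x : Fin N → ℤ} {s : ℕ} (hs : s + 1 < N) :
    (⟨s, Nat.lt_of_succ_lt hs⟩ : Fin N) ∈ DesSet x ↔ x ⟨s + 1, hs⟩ < x ⟨s, Nat.lt_of_succ_lt hs⟩ := by
  have h1 : finRotate N (⟨s, Nat.lt_of_succ_lt hs⟩ : Fin N) = ⟨s + 1, hs⟩ :=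
    finRotate_mk _ hs
  simp only [DesSet, mem_filter, mem_univ, true_and, h1]
  simp [hs]

lemma DesSet_lt (x : Fin N → ℤ) : ∀ p ∈ DesSet x, (p : ℕ) + 1 < N :=
  fun p hp => (mem_filter.1 hp).2.1

/-- Adjacent-increase property: `f` weakly increases at each adjacent pair,
strictly at pairs in `E`. -/
def AdjP (E : Finset (Fin N)) (f : Fin N → ℕ) : Prop :=
  ∀ (s : ℕ) (hs : s + 1 < N),
    f ⟨s, Nat.lt_of_succ_lt hs⟩ + (if (⟨s, Nat.lt_of_succ_lt hs⟩ : Fin N) ∈ E then 1 else 0)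
      ≤ f ⟨s + 1, hs⟩

lemma strictMono_of_adj {L : ℕ} (g : Fin N → Fin L)
    (h : ∀ (s : ℕ) (hs : s + 1 < N),
      g ⟨s, Nat.lt_of_succ_lt hs⟩ < g ⟨s + 1, hs⟩) : StrictMono g := by
  rcases N with _ | n
  · exact fun a => a.elim0
  · rw [Fin.strictMono_iff_lt_succ]
    intro i
    exact h i.val (by omega)

lemma strictMono_lex_iff {r : ℕ} (x : Fin N → ℤ) (hx : Function.Injective x)
    (f : Fin N → Fin (r + 1)) :
    StrictMono (fun t => toLex (((f t) : ℕ), x t)) ↔ AdjP (DesSet x) (fun t => (f t : ℕ)) := by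
  constructor
  · intro hf s hs
    have h1 : (⟨s, Nat.lt_of_succ_lt hs⟩ : Fin N) < ⟨s + 1, hs⟩ := by
      rw [Fin.lt_def]; exact Nat.lt_succ_self s
    have h2 := hf h1
    rw [Prod.Lex.lt_iff] at h2
    by_cases hmem : (⟨s, Nat.lt_of_succ_lt hs⟩ : Fin N) ∈ DesSet x
    · rw [if_pos hmem]
      have hd := (mem_DesSet_iff hs).1 hmem
      rcases h2 with h2 | ⟨-, h2⟩
      · show (f ⟨s, Nat.lt_of_succ_lt hs⟩ : ℕ) + 1 ≤ (f ⟨s + 1, hs⟩ : ℕ)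
        exact h2
      · exact absurd h2 (not_lt.2 hd.le)
    · rw [if_neg hmem]
      show (f ⟨s, Nat.lt_of_succ_lt hs⟩ : ℕ) + 0 ≤ (f ⟨s + 1, hs⟩ : ℕ)
      rcases h2 with h2 | ⟨h2, -⟩
      · simp only [ofLex_toLex] at h2; omega
      · simp only [ofLex_toLex] at h2; omega
  · intro hf
    rcases N with _ | n
    · exact fun a => a.elim0
    rw [Fin.strictMono_iff_lt_succ]
    intro i
    have hs : (i : ℕ) + 1 < n + 1 := by omega
    have e1 : (⟨(i : ℕ), Nat.lt_of_succ_lt hs⟩ : Fin (n + 1)) = i.castSucc := rfl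
    have e2 : (⟨(i : ℕ) + 1, hs⟩ : Fin (n + 1)) = i.succ := rfl
    have hdes : (i.castSucc ∈ DesSet x) ↔ x i.succ < x i.castSucc := by
      rw [← e1, ← e2]; exact mem_DesSet_iff hs
    have h1 : ((f i.castSucc : ℕ) + if i.castSucc ∈ DesSet x then 1 else 0) ≤ (f i.succ : ℕ) := by
      have h0 := hf i.val hs
      rw [e1, e2] at h0
      exact h0
    rw [Prod.Lex.lt_iff]
    by_cases hmem : i.castSucc ∈ DesSet x
    · rw [if_pos hmem] at h1
      left
      show (f i.castSucc : ℕ) < (f i.succ : ℕ)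
      omega
    · rw [if_neg hmem] at h1
      rw [hdes, not_lt] at hmem
      rcases Nat.lt_or_ge (f i.castSucc : ℕ) (f i.succ : ℕ) with h2 | h2
      · left
        exact h2
      · right
        have h3 : (f i.castSucc : ℕ) = (f i.succ : ℕ) := by omega
        refine ⟨h3, lt_of_le_of_ne hmem ?_⟩
        intro hc
        have h4 : i.castSucc = i.succ := hx hc
        have h5 := congrArg Fin.val h4
        simp at h5

lemma upper' {r : ℕ} (E : Finset (Fin N)) (hE : ∀ p ∈ E, (p : ℕ) + 1 < N) (f : Fin N → ℕ)
    (hf : AdjP E f) (hbd : ∀ t, f t ≤ r) (t : Fin N) :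
    f t + (E.filter (t ≤ ·)).card ≤ r := by
  obtain ⟨n, rfl⟩ : ∃ n, N = n + 1 := ⟨N - 1, by have := t.pos; omega⟩
  have h1 := steps E f hf t (Fin.last n) (Fin.le_last t)
  have h2 : E.filter (fun p => t ≤ p ∧ p < Fin.last n) = E.filter (t ≤ ·) := by
    apply filter_congr
    intro p hp
    have hlt := hE p hp
    refine and_iff_left ?_
    rw [Fin.lt_def]
    simp only [Fin.val_last]
    omega
  rw [h2] at h1
  exact le_trans h1 (hbd _)

lemma lower' (E : Finset (Fin N)) (f : Fin N → ℕ) (hf : AdjP E f) (t : Fin N) :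
    (E.filter (· < t)).card ≤ f t := by
  obtain ⟨n, rfl⟩ : ∃ n, N = n + 1 := ⟨N - 1, by have := t.pos; omega⟩
  have h1 := steps E f hf 0 t (Fin.zero_le t)
  have h2 : E.filter (fun p => 0 ≤ p ∧ p < t) = E.filter (· < t) := by
    apply filter_congr
    intro p _
    simp [Fin.zero_le p]
  rw [h2] at h1
  omega



lemma card_strictMono (N L : ℕ) :
    Nat.card {g : Fin N → Fin L // StrictMono g} = L.choose N := by
  classical
  have e : {g : Fin N → Fin L // StrictMono g} ≃ {S : Finset (Fin L) // S ∈ powersetCard N univ} :=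
    { toFun := fun g => ⟨Finset.image g.1 univ, mem_powersetCard.2 ⟨subset_univ _, by
        rw [Finset.card_image_of_injective _ g.2.injective, card_univ, Fintype.card_fin]⟩⟩
      invFun := fun S => ⟨S.1.orderEmbOfFin (mem_powersetCard.1 S.2).2,
        (S.1.orderEmbOfFin (mem_powersetCard.1 S.2).2).strictMono⟩
      left_inv := fun g => by
        apply Subtype.ext
        exact (orderEmbOfFin_unique _ (fun a => mem_image_of_mem g.1 (mem_univ a)) g.2).symm
      right_inv := fun S => by
        apply Subtype.ext
        rw [← Finset.coe_inj, Finset.coe_image, Finset.coe_univ, Set.image_univ]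
        exact range_orderEmbOfFin _ _ }
  rw [Nat.card_congr e]
  have : Nat.card {S : Finset (Fin L) // S ∈ powersetCard N univ}
      = (powersetCard N (univ : Finset (Fin L))).card := Nat.card_eq_finsetCard _
  rw [this, card_powersetCard, card_univ, Fintype.card_fin]

/-- Number of elements of `E` strictly below `t`. -/
def Dlow {N : ℕ} (E : Finset (Fin N)) (t : Fin N) : ℕ := (E.filter (· < t)).card

variable {N : ℕ}

lemma Dlow_le (E : Finset (Fin N)) (t : Fin N) : Dlow E t ≤ (t : ℕ) := by
  have h1 : E.filter (· < t) ⊆ univ.filter (fun p : Fin N => (p : ℕ) < (t : ℕ)) := by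
    intro p hp
    rw [mem_filter] at hp ⊢
    exact ⟨mem_univ _, hp.2⟩
  exact le_trans (card_le_card h1) (le_of_eq (card_filter_val_lt N t (le_of_lt t.isLt)))

lemma Dlow_le_card (E : Finset (Fin N)) (t : Fin N) : Dlow E t ≤ E.card :=
  card_le_card (filter_subset _ _)

lemma Dlow_succ (E : Finset (Fin N)) (s : ℕ) (hs : s + 1 < N) :
    Dlow E ⟨s + 1, hs⟩
      = Dlow E ⟨s, Nat.lt_of_succ_lt hs⟩
        + (if (⟨s, Nat.lt_of_succ_lt hs⟩ : Fin N) ∈ E then 1 else 0) := by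
  classical
  have hsplit : E.filter (· < (⟨s + 1, hs⟩ : Fin N))
      = E.filter (· < (⟨s, Nat.lt_of_succ_lt hs⟩ : Fin N))
        ∪ E.filter (· = (⟨s, Nat.lt_of_succ_lt hs⟩ : Fin N)) := by
    rw [← filter_or]
    apply filter_congr
    intro p _
    have hv1 : ((⟨s + 1, hs⟩ : Fin N) : ℕ) = s + 1 := rfl
    have hv2 : ((⟨s, Nat.lt_of_succ_lt hs⟩ : Fin N) : ℕ) = s := rfl
    rw [Fin.lt_def, Fin.lt_def, hv1, hv2, Fin.ext_iff, hv2]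
    omega
  have hdisj : Disjoint (E.filter (· < (⟨s, Nat.lt_of_succ_lt hs⟩ : Fin N)))
      (E.filter (· = (⟨s, Nat.lt_of_succ_lt hs⟩ : Fin N))) := by
    rw [Finset.disjoint_left]
    intro p hp hq
    rw [mem_filter] at hp hq
    exact absurd hq.2 (ne_of_lt hp.2)
  unfold Dlow
  rw [hsplit, Finset.card_union_of_disjoint hdisj, Finset.filter_eq']
  split <;> simp

lemma Dlow_add_upper (E : Finset (Fin N)) (t : Fin N) :
    Dlow E t + (E.filter (t ≤ ·)).card = E.card := by
  classical
  have h := Finset.card_filter_add_card_filter_not (s := E) (p := (· < t))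
  have he : E.filter (t ≤ ·) = E.filter (fun a => ¬ a < t) :=
    filter_congr (by intro p _; simp [not_lt])
  unfold Dlow
  rw [he]
  exact h

/-- the set of all non-final positions -/
def Eall (N : ℕ) : Finset (Fin N) := univ.filter fun p => (p : ℕ) + 1 < N

lemma adjP_Eall {L : ℕ} (g : Fin N → Fin L) (hg : StrictMono g) :
    AdjP (Eall N) (fun t => (g t : ℕ)) := by
  intro s hs
  have hmem : (⟨s, Nat.lt_of_succ_lt hs⟩ : Fin N) ∈ Eall N := by
    simp [Eall]; omega
  rw [if_pos hmem]
  have : (⟨s, Nat.lt_of_succ_lt hs⟩ : Fin N) < ⟨s + 1, hs⟩ := by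
    rw [Fin.lt_def]; exact Nat.lt_succ_self s
  have h2 := hg this
  rw [Fin.lt_def] at h2
  show (g ⟨s, Nat.lt_of_succ_lt hs⟩ : ℕ) + 1 ≤ (g ⟨s + 1, hs⟩ : ℕ)
  omega

lemma strictMono_val_lower {L : ℕ} (g : Fin N → Fin L) (hg : StrictMono g) (t : Fin N) :
    (t : ℕ) ≤ (g t : ℕ) := by
  have h1 := lower' (Eall N) (fun t => (g t : ℕ)) (adjP_Eall g hg) t
  have h2 : ((Eall N).filter (· < t)).card = (t : ℕ) := by
    have he : (Eall N).filter (· < t) = univ.filter (fun p : Fin N => (p : ℕ) < (t : ℕ)) := by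
      ext p
      simp only [Eall, mem_filter, filter_filter, mem_univ, true_and, Fin.lt_def]
      have := t.isLt
      omega
    rw [he, card_filter_val_lt N t (le_of_lt t.isLt)]
  rw [h2] at h1
  exact h1

lemma strictMono_val_upper {L r : ℕ} (g : Fin N → Fin L) (hg : StrictMono g)
    (hbd : ∀ t, (g t : ℕ) ≤ r) (t : Fin N) :
    (g t : ℕ) + (N - 1 - (t : ℕ)) ≤ r := by
  have h1 := upper' (Eall N) (fun p hp => (mem_filter.1 hp).2) (fun t => (g t : ℕ))
    (adjP_Eall g hg) hbd t
  have h2 : ((Eall N).filter (t ≤ ·)).card = N - 1 - (t : ℕ) := by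
    have he : (Eall N).filter (t ≤ ·)
        = univ.filter (fun p : Fin N => (t : ℕ) ≤ (p : ℕ) ∧ (p : ℕ) < N - 1) := by
      ext p
      simp only [Eall, mem_filter, filter_filter, mem_univ, true_and, Fin.le_def]
      have := p.isLt
      omega
    rw [he, card_filter_Ico _ _ (by omega)]
  rw [h2] at h1
  exact h1



/-- Compatible labelings: weakly increasing labels in `{0,…,r}` along the word `x`,
strictly increasing at descents -- encoded via lexicographic strict monotonicity. -/
abbrev Cpt (N r : ℕ) (x : Fin N → ℤ) : Type :=
  {f : Fin N → Fin (r + 1) // StrictMono fun t => toLex (((f t) : ℕ), x t)}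

lemma cpt_cond_of_adj {r : ℕ} {x : Fin N → ℤ} (hx : Function.Injective x)
    (f : Fin N → Fin (r + 1)) (h : AdjP (DesSet x) (fun t => (f t : ℕ))) :
    StrictMono fun t => toLex (((f t) : ℕ), x t) := (strictMono_lex_iff x hx f).2 h

noncomputable def shift_equiv {N r : ℕ} (x : Fin N → ℤ) (hx : Function.Injective x)
    (hdr : des x ≤ r) :
    Cpt N r x ≃ {g : Fin N → Fin (r - des x + N) // StrictMono g} := by
  classical
  have hdcard : (DesSet x).card = des x := (des_eq x).symm
  have hb1 : ∀ (f : Cpt N r x) (t : Fin N),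
      (f.1 t : ℕ) + ((t : ℕ) - Dlow (DesSet x) t) < r - des x + N := by
    intro f t
    have hadj := (strictMono_lex_iff x hx f.1).1 f.2
    have hupper : (f.1 t : ℕ) + ((DesSet x).filter (t ≤ ·)).card ≤ r :=
      upper' (DesSet x) (DesSet_lt x) (fun t => ((f.1 t : ℕ))) hadj
        (fun t' => Nat.lt_succ_iff.1 (f.1 t').isLt) t
    have hDU := Dlow_add_upper (DesSet x) t
    have hDle := Dlow_le (DesSet x) t
    have htlt := t.isLt
    rw [hdcard] at hDU
    omega
  have hm1 : ∀ (f : Cpt N r x), StrictMono (fun t : Fin N =>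
      (⟨(f.1 t : ℕ) + ((t : ℕ) - Dlow (DesSet x) t), hb1 f t⟩ : Fin (r - des x + N))) := by
    intro f
    apply strictMono_of_adj
    intro s hs
    have hadj := (strictMono_lex_iff x hx f.1).1 f.2
    have h1 : ((f.1 ⟨s, Nat.lt_of_succ_lt hs⟩ : ℕ)
        + if (⟨s, Nat.lt_of_succ_lt hs⟩ : Fin N) ∈ DesSet x then 1 else 0)
        ≤ (f.1 ⟨s + 1, hs⟩ : ℕ) := hadj s hs
    have h2 := Dlow_succ (DesSet x) s hs
    have h3 : Dlow (DesSet x) ⟨s, Nat.lt_of_succ_lt hs⟩ ≤ s :=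
      Dlow_le (DesSet x) (⟨s, Nat.lt_of_succ_lt hs⟩ : Fin N)
    have hv1 : ((⟨s, Nat.lt_of_succ_lt hs⟩ : Fin N) : ℕ) = s := rfl
    have hv2 : ((⟨s + 1, hs⟩ : Fin N) : ℕ) = s + 1 := rfl
    rw [Fin.lt_def]
    show (f.1 ⟨s, Nat.lt_of_succ_lt hs⟩ : ℕ)
        + (((⟨s, Nat.lt_of_succ_lt hs⟩ : Fin N) : ℕ) - Dlow (DesSet x) ⟨s, Nat.lt_of_succ_lt hs⟩)
      < (f.1 ⟨s + 1, hs⟩ : ℕ) + (((⟨s + 1, hs⟩ : Fin N) : ℕ) - Dlow (DesSet x) ⟨s + 1, hs⟩)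
    rw [hv1, hv2, h2]
    by_cases hmem : (⟨s, Nat.lt_of_succ_lt hs⟩ : Fin N) ∈ DesSet x
    · rw [if_pos hmem] at h1 h2 ⊢
      omega
    · rw [if_neg hmem] at h1 h2 ⊢
      omega
  have hb2 : ∀ (g : {g : Fin N → Fin (r - des x + N) // StrictMono g}) (t : Fin N),
      (g.1 t : ℕ) - ((t : ℕ) - Dlow (DesSet x) t) < r + 1 := by
    intro g t
    have h1 := strictMono_val_upper (r := r - des x + N - 1) g.1 g.2
      (fun t' => by have := (g.1 t').isLt; omega) t
    have h2 := strictMono_val_lower g.1 g.2 t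
    have h3 := Dlow_le (DesSet x) t
    have h4 := Dlow_le_card (DesSet x) t
    have htlt := t.isLt
    rw [hdcard] at h4
    omega
  have hm2 : ∀ (g : {g : Fin N → Fin (r - des x + N) // StrictMono g}),
      StrictMono (fun t : Fin N => toLex
        (((⟨(g.1 t : ℕ) - ((t : ℕ) - Dlow (DesSet x) t), hb2 g t⟩ : Fin (r + 1)) : ℕ), x t)) := by
    intro g
    apply cpt_cond_of_adj hx
    intro s hs
    have hv1 : ((⟨s, Nat.lt_of_succ_lt hs⟩ : Fin N) : ℕ) = s := rfl
    have hv2 : ((⟨s + 1, hs⟩ : Fin N) : ℕ) = s + 1 := rfl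
    have hlt : (⟨s, Nat.lt_of_succ_lt hs⟩ : Fin N) < ⟨s + 1, hs⟩ := by
      rw [Fin.lt_def, hv1, hv2]; omega
    have h1 := g.2 hlt
    rw [Fin.lt_def] at h1
    have h2 := Dlow_succ (DesSet x) s hs
    have h3 : Dlow (DesSet x) ⟨s, Nat.lt_of_succ_lt hs⟩ ≤ s :=
      Dlow_le (DesSet x) (⟨s, Nat.lt_of_succ_lt hs⟩ : Fin N)
    have h4 : s ≤ (g.1 ⟨s, Nat.lt_of_succ_lt hs⟩ : ℕ) :=
      strictMono_val_lower g.1 g.2 (⟨s, Nat.lt_of_succ_lt hs⟩ : Fin N)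
    show ((g.1 ⟨s, Nat.lt_of_succ_lt hs⟩ : ℕ)
          - (((⟨s, Nat.lt_of_succ_lt hs⟩ : Fin N) : ℕ) - Dlow (DesSet x) ⟨s, Nat.lt_of_succ_lt hs⟩))
        + (if (⟨s, Nat.lt_of_succ_lt hs⟩ : Fin N) ∈ DesSet x then 1 else 0)
      ≤ (g.1 ⟨s + 1, hs⟩ : ℕ)
          - (((⟨s + 1, hs⟩ : Fin N) : ℕ) - Dlow (DesSet x) ⟨s + 1, hs⟩)
    rw [hv1, hv2, h2]
    by_cases hmem : (⟨s, Nat.lt_of_succ_lt hs⟩ : Fin N) ∈ DesSet x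
    · rw [if_pos hmem] at h2 ⊢
      omega
    · rw [if_neg hmem] at h2 ⊢
      omega
  exact
    { toFun := fun f => ⟨fun t => ⟨(f.1 t : ℕ) + ((t : ℕ) - Dlow (DesSet x) t), hb1 f t⟩, hm1 f⟩
      invFun := fun g => ⟨fun t => ⟨(g.1 t : ℕ) - ((t : ℕ) - Dlow (DesSet x) t), hb2 g t⟩, hm2 g⟩
      left_inv := by
        intro f
        apply Subtype.ext
        funext t
        apply Fin.ext
        show ((f.1 t : ℕ) + ((t : ℕ) - Dlow (DesSet x) t)) - ((t : ℕ) - Dlow (DesSet x) t)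
          = (f.1 t : ℕ)
        omega
      right_inv := by
        intro g
        apply Subtype.ext
        funext t
        apply Fin.ext
        have h2 := strictMono_val_lower g.1 g.2 t
        have h3 := Dlow_le (DesSet x) t
        show ((g.1 t : ℕ) - ((t : ℕ) - Dlow (DesSet x) t)) + ((t : ℕ) - Dlow (DesSet x) t)
          = (g.1 t : ℕ)
        omega }

lemma cptCard {N : ℕ} (r : ℕ) (x : Fin N → ℤ) (hx : Function.Injective x) :
    Nat.card (Cpt N r x) = (r + N - des x).choose N := by
  classical
  by_cases hdr : des x ≤ r
  · rw [Nat.card_congr (shift_equiv x hx hdr), card_strictMono]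
    congr 1
    omega
  · have hdN : des x ≤ N := by
      rw [des_eq]
      exact le_trans (card_le_card (filter_subset _ _)) (le_of_eq (by simp))
    have hempty : IsEmpty (Cpt N r x) := by
      constructor
      intro f
      have hN : 0 < N := by
        by_contra hN
        have : des x = 0 := by omega
        omega
      obtain ⟨n, rfl⟩ : ∃ n, N = n + 1 := ⟨N - 1, by omega⟩
      have hadj := (strictMono_lex_iff x hx f.1).1 f.2
      have h1 : (f.1 0 : ℕ)
          + ((DesSet x).filter (fun p => 0 ≤ p ∧ p < Fin.last n)).card
          ≤ (f.1 (Fin.last n) : ℕ) :=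
        steps (DesSet x) (fun t => ((f.1 t : ℕ))) hadj 0 (Fin.last n) (Fin.zero_le _)
      have h2 : (DesSet x).filter (fun p => 0 ≤ p ∧ p < Fin.last n) = DesSet x := by
        apply Finset.filter_true_of_mem
        intro p hp
        have := DesSet_lt x p hp
        refine ⟨Fin.zero_le _, ?_⟩
        rw [Fin.lt_def]
        simp only [Fin.val_last]
        omega
      rw [h2, ← des_eq] at h1
      have h3 : (f.1 (Fin.last n) : ℕ) ≤ r := Nat.lt_succ_iff.1 (f.1 (Fin.last n)).isLt
      omega
    rw [Nat.card_of_isEmpty]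
    symm
    apply Nat.choose_eq_zero_of_lt
    omega



section ShuffleWords

variable {m n : ℕ}

/-- Subsets of positions of size `m`, parametrizing shuffles. -/
abbrev SubS (m n : ℕ) := {S : Finset (Fin (m + n)) // S.card = m}

lemma compl_card (S : SubS m n) : (S.1ᶜ).card = n := by
  rw [card_compl, S.2]
  simp

noncomputable def embU (S : SubS m n) : Fin m ↪o Fin (m + n) := S.1.orderEmbOfFin S.2

noncomputable def embV (S : SubS m n) : Fin n ↪o Fin (m + n) :=
  (S.1ᶜ).orderEmbOfFin (compl_card S)

noncomputable def W (u : Fin m → ℤ) (v : Fin n → ℤ) (S : SubS m n) : Fin (m + n) → ℤ :=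
  fun t =>
    if h : t ∈ S.1 then u ((S.1.orderIsoOfFin S.2).symm ⟨t, h⟩)
    else v (((S.1ᶜ).orderIsoOfFin (compl_card S)).symm ⟨t, by simp [h]⟩)

variable (u : Fin m → ℤ) (v : Fin n → ℤ)

lemma W_embU (S : SubS m n) (a : Fin m) : W u v S (embU S a) = u a := by
  have hmem : embU S a ∈ S.1 := orderEmbOfFin_mem _ _ _
  rw [W, dif_pos hmem]
  congr 1
  have h1 : (S.1.orderIsoOfFin S.2) a = ⟨embU S a, hmem⟩ :=
    Subtype.ext (coe_orderIsoOfFin_apply _ _ _)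
  rw [← h1, OrderIso.symm_apply_apply]

lemma W_embV (S : SubS m n) (b : Fin n) : W u v S (embV S b) = v b := by
  have hmem : embV S b ∈ S.1ᶜ := orderEmbOfFin_mem _ _ _
  have hmem' : embV S b ∉ S.1 := (Finset.mem_compl).1 hmem
  rw [W, dif_neg hmem']
  congr 1
  have h1 : ((S.1ᶜ).orderIsoOfFin (compl_card S)) b = ⟨embV S b, hmem⟩ :=
    Subtype.ext (coe_orderIsoOfFin_apply _ _ _)
  rw [← h1, OrderIso.symm_apply_apply]

lemma W_spec (S : SubS m n) (t : Fin (m + n)) :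
    (t ∈ S.1 ∧ ∃ a, embU S a = t ∧ W u v S t = u a)
      ∨ (t ∉ S.1 ∧ ∃ b, embV S b = t ∧ W u v S t = v b) := by
  by_cases h : t ∈ S.1
  · left
    refine ⟨h, (S.1.orderIsoOfFin S.2).symm ⟨t, h⟩, ?_, ?_⟩
    · calc embU S ((S.1.orderIsoOfFin S.2).symm ⟨t, h⟩)
          = ((S.1.orderIsoOfFin S.2) ((S.1.orderIsoOfFin S.2).symm ⟨t, h⟩) : Fin (m + n)) :=
            (coe_orderIsoOfFin_apply _ _ _).symm
        _ = t := by rw [OrderIso.apply_symm_apply]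
    · rw [W, dif_pos h]
  · right
    have h' : t ∈ S.1ᶜ := Finset.mem_compl.2 h
    refine ⟨h, ((S.1ᶜ).orderIsoOfFin (compl_card S)).symm ⟨t, h'⟩, ?_, ?_⟩
    · calc embV S (((S.1ᶜ).orderIsoOfFin (compl_card S)).symm ⟨t, h'⟩)
          = (((S.1ᶜ).orderIsoOfFin (compl_card S))
              (((S.1ᶜ).orderIsoOfFin (compl_card S)).symm ⟨t, h'⟩) : Fin (m + n)) :=
            (coe_orderIsoOfFin_apply _ _ _).symm
        _ = t := by rw [OrderIso.apply_symm_apply]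
    · rw [W, dif_neg h]

variable (hu : Function.Injective u) (hv : Function.Injective v)
  (hdisj : ∀ a b, u a ≠ v b)

include hu hv hdisj in
lemma W_word_inj (S : SubS m n) : Function.Injective (W u v S) := by
  intro t t' he
  rcases W_spec u v S t with ⟨ht, a, hat, hwt⟩ | ⟨ht, b, hbt, hwt⟩ <;>
    rcases W_spec u v S t' with ⟨ht', a', hat', hwt'⟩ | ⟨ht', b', hbt', hwt'⟩
  · rw [hwt, hwt'] at he
    rw [← hat, ← hat', hu he]
  · rw [hwt, hwt'] at he
    exact absurd he (hdisj a b')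
  · rw [hwt, hwt'] at he
    exact absurd he.symm (hdisj a' b)
  · rw [hwt, hwt'] at he
    rw [← hbt, ← hbt', hv he]

lemma W_isShuffle (S : SubS m n) : IsShuffle u v (W u v S) := by
  refine ⟨embU S, embV S, (embU S).strictMono, (embV S).strictMono,
    W_embU u v S, W_embV u v S, ?_⟩
  intro t
  rcases W_spec u v S t with ⟨-, a, hat, -⟩ | ⟨-, b, hbt, -⟩
  · exact Or.inl ⟨a, hat⟩
  · exact Or.inr ⟨b, hbt⟩

include hdisj in
lemma mem_S_iff (S : SubS m n) (t : Fin (m + n)) :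
    t ∈ S.1 ↔ W u v S t ∈ Set.range u := by
  constructor
  · intro h
    rcases W_spec u v S t with ⟨-, a, -, hwt⟩ | ⟨ht, -⟩
    · exact ⟨a, hwt.symm⟩
    · exact absurd h ht
  · rintro ⟨a, ha⟩
    by_contra h
    rcases W_spec u v S t with ⟨ht, -⟩ | ⟨-, b, -, hwt⟩
    · exact h ht
    · rw [hwt] at ha
      exact hdisj a b ha

include hdisj in
lemma W_param_inj : Function.Injective (W u v : SubS m n → Fin (m + n) → ℤ) := by
  intro S S' he
  apply Subtype.ext
  ext t
  rw [mem_S_iff u v hdisj S t, mem_S_iff u v hdisj S' t, he]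

include hdisj in
lemma isShuffle_surj (w : Fin (m + n) → ℤ) (hw : IsShuffle u v w) :
    ∃ S : SubS m n, W u v S = w := by
  obtain ⟨fm, g, hfm, hg, hwu, hwv, hcov⟩ := hw
  refine ⟨⟨Finset.image fm univ,
    by rw [Finset.card_image_of_injective _ hfm.injective, card_univ, Fintype.card_fin]⟩, ?_⟩
  set S : SubS m n := ⟨Finset.image fm univ,
    by rw [Finset.card_image_of_injective _ hfm.injective, card_univ, Fintype.card_fin]⟩ with hS
  have hfm_eq : fm = ⇑(embU S) :=
    orderEmbOfFin_unique S.2 (fun a => mem_image_of_mem fm (mem_univ a)) hfm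
  have hg_mem : ∀ b, g b ∈ S.1ᶜ := by
    intro b
    rw [Finset.mem_compl]
    intro hb
    obtain ⟨a, -, ha⟩ := Finset.mem_image.1 hb
    have : u a = v b := by rw [← hwu a, ← hwv b, ha]
    exact hdisj a b this
  have hg_eq : g = ⇑(embV S) := orderEmbOfFin_unique (compl_card S) hg_mem hg
  funext t
  rcases hcov t with ⟨a, ha⟩ | ⟨b, hb⟩
  · have e1 : fm a = embU S a := congrFun hfm_eq a
    rw [← ha, e1, W_embU, ← e1]
    exact (hwu a).symm
  · have e1 : g b = embV S b := congrFun hg_eq b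
    rw [← hb, e1, W_embV, ← e1]
    exact (hwv b).symm



variable {r : ℕ}

lemma cptU_cond (S : SubS m n) (f : Cpt (m + n) r (W u v S)) :
    StrictMono fun a => toLex (((f.1 (embU S a)) : ℕ), u a) := by
  intro a b hab
  have h1 : ∀ c, toLex (((f.1 (embU S c)) : ℕ), u c)
      = toLex (((f.1 (embU S c)) : ℕ), W u v S (embU S c)) := by
    intro c; rw [W_embU]
  show toLex (((f.1 (embU S a)) : ℕ), u a) < toLex (((f.1 (embU S b)) : ℕ), u b)
  rw [h1 a, h1 b]
  exact f.2 ((embU S).strictMono hab)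

lemma cptV_cond (S : SubS m n) (f : Cpt (m + n) r (W u v S)) :
    StrictMono fun b => toLex (((f.1 (embV S b)) : ℕ), v b) := by
  intro a b hab
  have h1 : ∀ c, toLex (((f.1 (embV S c)) : ℕ), v c)
      = toLex (((f.1 (embV S c)) : ℕ), W u v S (embV S c)) := by
    intro c; rw [W_embV]
  show toLex (((f.1 (embV S a)) : ℕ), v a) < toLex (((f.1 (embV S b)) : ℕ), v b)
  rw [h1 a, h1 b]
  exact f.2 ((embV S).strictMono hab)

/-- The forward map of the key bijection. -/
noncomputable def Fmap (r : ℕ) (p : Σ S : SubS m n, Cpt (m + n) r (W u v S)) :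
    Cpt m r u × Cpt n r v :=
  (⟨fun a => p.2.1 (embU p.1 a), cptU_cond u v p.1 p.2⟩,
   ⟨fun b => p.2.1 (embV p.1 b), cptV_cond u v p.1 p.2⟩)

/-- key sets -/
noncomputable def keyU (fu : Fin m → Fin (r + 1)) : Finset (ℕ ×ₗ ℤ) :=
  Finset.image (fun a => toLex (((fu a) : ℕ), u a)) univ

noncomputable def keyV (fv : Fin n → Fin (r + 1)) : Finset (ℕ ×ₗ ℤ) :=
  Finset.image (fun b => toLex (((fv b) : ℕ), v b)) univ

lemma image_key (S : SubS m n) (f : Cpt (m + n) r (W u v S)) :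
    Finset.image (fun t => toLex (((f.1 t) : ℕ), W u v S t)) univ
      = keyU u (fun a => f.1 (embU S a)) ∪ keyV v (fun b => f.1 (embV S b)) := by
  ext k
  simp only [mem_image, mem_union, keyU, keyV, mem_univ, true_and]
  constructor
  · rintro ⟨t, rfl⟩
    rcases W_spec u v S t with ⟨-, a, hat, -⟩ | ⟨-, b, hbt, -⟩
    · subst hat
      exact Or.inl ⟨a, by rw [W_embU]⟩
    · subst hbt
      exact Or.inr ⟨b, by rw [W_embV]⟩
  · rintro (⟨a, rfl⟩ | ⟨b, rfl⟩)
    · exact ⟨embU S a, by rw [W_embU]⟩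
    · exact ⟨embV S b, by rw [W_embV]⟩

include hu in
lemma keyU_card (fu : Fin m → Fin (r + 1)) : (keyU u fu).card = m := by
  rw [keyU, Finset.card_image_of_injective, card_univ, Fintype.card_fin]
  intro a a' h
  exact hu (congrArg (fun p => (ofLex p).2) h)

include hv in
lemma keyV_card (fv : Fin n → Fin (r + 1)) : (keyV v fv).card = n := by
  rw [keyV, Finset.card_image_of_injective, card_univ, Fintype.card_fin]
  intro b b' h
  exact hv (congrArg (fun p => (ofLex p).2) h)

include hdisj in
lemma key_disj (fu : Fin m → Fin (r + 1)) (fv : Fin n → Fin (r + 1)) :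
    Disjoint (keyU u fu) (keyV v fv) := by
  rw [Finset.disjoint_left]
  intro k hk1 hk2
  simp only [keyU, keyV, mem_image, mem_univ, true_and] at hk1 hk2
  obtain ⟨a, ha⟩ := hk1
  obtain ⟨b, hb⟩ := hk2
  have : u a = v b := congrArg (fun p => (ofLex p).2) (ha.trans hb.symm)
  exact hdisj a b this

include hu hv hdisj in
lemma Fmap_inj : Function.Injective (Fmap u v r) := by
  intro p q hpq
  obtain ⟨S, f⟩ := p
  obtain ⟨S', f'⟩ := q
  have h1 : (fun a => f.1 (embU S a)) = (fun a => f'.1 (embU S' a)) :=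
    congrArg Subtype.val (congrArg Prod.fst hpq)
  have h2 : (fun b => f.1 (embV S b)) = (fun b => f'.1 (embV S' b)) :=
    congrArg Subtype.val (congrArg Prod.snd hpq)
  have hK : keyU u (fun a => f.1 (embU S a)) ∪ keyV v (fun b => f.1 (embV S b))
      = keyU u (fun a => f'.1 (embU S' a)) ∪ keyV v (fun b => f'.1 (embV S' b)) := by
    rw [h1, h2]
  have hKcard : (keyU u (fun a => f.1 (embU S a)) ∪ keyV v (fun b => f.1 (embV S b))).card
      = m + n := by
    rw [Finset.card_union_of_disjoint (key_disj u v hdisj _ _),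
      keyU_card u hu, keyV_card v hv]
  have hKcard' : (keyU u (fun a => f'.1 (embU S' a)) ∪ keyV v (fun b => f'.1 (embV S' b))).card
      = m + n := by
    rw [Finset.card_union_of_disjoint (key_disj u v hdisj _ _),
      keyU_card u hu, keyV_card v hv]
  have hκ1 : (fun t => toLex (((f.1 t) : ℕ), W u v S t))
      = (keyU u (fun a => f.1 (embU S a)) ∪ keyV v (fun b => f.1 (embV S b))).orderEmbOfFin
        hKcard := by
    apply orderEmbOfFin_unique
    · intro t
      rw [← image_key]
      exact mem_image_of_mem _ (mem_univ t)
    · exact f.2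
  have hκ2 : (fun t => toLex (((f'.1 t) : ℕ), W u v S' t))
      = (keyU u (fun a => f.1 (embU S a)) ∪ keyV v (fun b => f.1 (embV S b))).orderEmbOfFin
        hKcard := by
    apply orderEmbOfFin_unique
    · intro t
      rw [hK, ← image_key]
      exact mem_image_of_mem _ (mem_univ t)
    · exact f'.2
  have hκeq : (fun t => toLex (((f.1 t) : ℕ), W u v S t))
      = (fun t => toLex (((f'.1 t) : ℕ), W u v S' t)) :=
    hκ1.trans hκ2.symm
  have hfeq : f.1 = f'.1 := by
    funext t
    apply Fin.ext
    exact congrArg (fun p => (ofLex p).1) (congrFun hκeq t)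
  have hWeq : W u v S = W u v S' := by
    funext t
    exact congrArg (fun p => (ofLex p).2) (congrFun hκeq t)
  have hSeq : S = S' := W_param_inj u v hdisj hWeq
  subst hSeq
  have : f = f' := Subtype.ext hfeq
  rw [this]



include hu hv hdisj in
lemma Fmap_surj : Function.Surjective (Fmap u v r) := by
  classical
  rintro ⟨⟨fu, hfu⟩, ⟨fv, hfv⟩⟩
  set K : Finset (ℕ ×ₗ ℤ) := keyU u fu ∪ keyV v fv with hKdef
  have hKcard : K.card = m + n := by
    rw [hKdef, Finset.card_union_of_disjoint (key_disj u v hdisj _ _),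
      keyU_card u hu, keyV_card v hv]
  set κ := K.orderEmbOfFin hKcard with hκdef
  have hκrange : ∀ t, κ t ∈ K := fun t => orderEmbOfFin_mem _ _ _
  have hκsurj : ∀ k ∈ K, ∃ t, κ t = k := by
    intro k hk
    have : k ∈ Set.range ⇑κ := by
      rw [hκdef, range_orderEmbOfFin]
      exact hk
    exact this
  -- the position set
  have hScard : (univ.filter fun t => κ t ∈ keyU u fu).card = m := by
    have hb : (univ.filter fun t => κ t ∈ keyU u fu).card = (keyU u fu).card := by
      apply Finset.card_bij (fun t _ => κ t)
      · intro t ht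
        exact (mem_filter.1 ht).2
      · intro t _ t' _ he
        exact κ.injective he
      · intro k hk
        obtain ⟨t, rfl⟩ := hκsurj k (Finset.mem_union_left _ hk)
        exact ⟨t, mem_filter.2 ⟨mem_univ t, hk⟩, rfl⟩
    rw [hb]
    exact keyU_card u hu fu
  set S : SubS m n := ⟨univ.filter fun t => κ t ∈ keyU u fu, hScard⟩ with hSdef
  have hmemS : ∀ t, t ∈ S.1 ↔ κ t ∈ keyU u fu := by
    intro t
    rw [hSdef]
    simp
  have hmemSc : ∀ t, t ∈ S.1ᶜ ↔ κ t ∈ keyV v fv := by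
    intro t
    rw [Finset.mem_compl, hmemS]
    constructor
    · intro hnot
      rcases Finset.mem_union.1 (hκrange t) with h | h
      · exact absurd h hnot
      · exact h
    · intro hmem hcKu
      exact absurd hmem (Finset.disjoint_left.1 (key_disj u v hdisj fu fv) hcKu)
  -- κ restricted to S equals the u-keys
  have hclaimU : (fun a => κ (embU S a)) = (fun a => toLex (((fu a) : ℕ), u a)) := by
    have hinjU : Function.Injective (fun a => toLex (((fu a) : ℕ), u a)) := by
      intro a a' h
      exact hu (congrArg (fun p => (ofLex p).2) h)
    have hcardU : (keyU u fu).card = m := keyU_card u hu fu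
    have e1 : (fun a => κ (embU S a)) = ⇑((keyU u fu).orderEmbOfFin hcardU) := by
      apply orderEmbOfFin_unique
      · intro a
        exact (hmemS _).1 (orderEmbOfFin_mem _ _ _)
      · exact κ.strictMono.comp (embU S).strictMono
    have e2 : (fun a => toLex (((fu a) : ℕ), u a)) = ⇑((keyU u fu).orderEmbOfFin hcardU) := by
      apply orderEmbOfFin_unique
      · intro a
        exact mem_image_of_mem _ (mem_univ a)
      · exact hfu
    rw [e1, e2]
  have hclaimV : (fun b => κ (embV S b)) = (fun b => toLex (((fv b) : ℕ), v b)) := by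
    have hcardV : (keyV v fv).card = n := keyV_card v hv fv
    have e1 : (fun b => κ (embV S b)) = ⇑((keyV v fv).orderEmbOfFin hcardV) := by
      apply orderEmbOfFin_unique
      · intro b
        exact (hmemSc _).1 (orderEmbOfFin_mem _ _ _)
      · exact κ.strictMono.comp (embV S).strictMono
    have e2 : (fun b => toLex (((fv b) : ℕ), v b)) = ⇑((keyV v fv).orderEmbOfFin hcardV) := by
      apply orderEmbOfFin_unique
      · intro b
        exact mem_image_of_mem _ (mem_univ b)
      · exact hfv
    rw [e1, e2]
  -- the labeling
  have hbound : ∀ t, (ofLex (κ t)).1 < r + 1 := by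
    intro t
    rcases Finset.mem_union.1 (hκrange t) with h | h
    · obtain ⟨a, -, ha⟩ := Finset.mem_image.1 h
      have : (ofLex (κ t)).1 = ((fu a) : ℕ) := (congrArg (fun p => (ofLex p).1) ha).symm
      rw [this]
      exact (fu a).isLt
    · obtain ⟨b, -, hb⟩ := Finset.mem_image.1 h
      have : (ofLex (κ t)).1 = ((fv b) : ℕ) := (congrArg (fun p => (ofLex p).1) hb).symm
      rw [this]
      exact (fv b).isLt
  set f : Fin (m + n) → Fin (r + 1) := fun t => ⟨(ofLex (κ t)).1, hbound t⟩ with hfdef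
  have hWf : ∀ t, W u v S t = (ofLex (κ t)).2 := by
    intro t
    rcases W_spec u v S t with ⟨-, a, hat, hwt⟩ | ⟨-, b, hbt, hwt⟩
    · rw [hwt, ← hat]
      have := congrFun hclaimU a
      rw [this]
      rfl
    · rw [hwt, ← hbt]
      have := congrFun hclaimV b
      rw [this]
      rfl
  have hstrict : StrictMono (fun t => toLex (((f t) : ℕ), W u v S t)) := by
    have he : (fun t => toLex (((f t) : ℕ), W u v S t)) = ⇑κ := by
      funext t
      rw [hfdef]
      show toLex ((ofLex (κ t)).1, W u v S t) = κ t
      rw [hWf t]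
      rfl
    rw [he]
    exact κ.strictMono
  refine ⟨⟨S, ⟨f, hstrict⟩⟩, ?_⟩
  rw [Fmap]
  apply Prod.ext
  · apply Subtype.ext
    funext a
    apply Fin.ext
    show (ofLex (κ (embU S a))).1 = ((fu a) : ℕ)
    rw [congrFun hclaimU a]
    rfl
  · apply Subtype.ext
    funext b
    apply Fin.ext
    show (ofLex (κ (embV S b))).1 = ((fv b) : ℕ)
    rw [congrFun hclaimV b]
    rfl



open scoped Classical in
include hu hv hdisj in
lemma sum_card_eq (r : ℕ) :
    ∑ S : SubS m n, Nat.card (Cpt (m + n) r (W u v S))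
      = Nat.card (Cpt m r u) * Nat.card (Cpt n r v) := by
  have hbij : Function.Bijective (Fmap u v r) :=
    ⟨Fmap_inj u v hu hv hdisj, Fmap_surj u v hu hv hdisj⟩
  have h1 : Nat.card (Σ S : SubS m n, Cpt (m + n) r (W u v S))
      = Nat.card (Cpt m r u × Cpt n r v) := Nat.card_congr (Equiv.ofBijective _ hbij)
  calc ∑ S : SubS m n, Nat.card (Cpt (m + n) r (W u v S))
      = ∑ S : SubS m n, Fintype.card (Cpt (m + n) r (W u v S)) := by
        apply Finset.sum_congr rfl
        intro S _
        exact Nat.card_eq_fintype_card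
    _ = Fintype.card (Σ S : SubS m n, Cpt (m + n) r (W u v S)) := (Fintype.card_sigma).symm
    _ = Nat.card (Σ S : SubS m n, Cpt (m + n) r (W u v S)) := Nat.card_eq_fintype_card.symm
    _ = Nat.card (Cpt m r u × Cpt n r v) := h1
    _ = Nat.card (Cpt m r u) * Nat.card (Cpt n r v) := Nat.card_prod _ _

include hu hv hdisj in
lemma master (r : ℕ) :
    ∑ S : SubS m n, (r + (m + n) - des (W u v S)).choose (m + n)
      = (r + m - des u).choose m * (r + n - des v).choose n := by
  calc ∑ S : SubS m n, (r + (m + n) - des (W u v S)).choose (m + n)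
      = ∑ S : SubS m n, Nat.card (Cpt (m + n) r (W u v S)) := by
        apply Finset.sum_congr rfl
        intro S _
        exact (cptCard r _ (W_word_inj u v hu hv hdisj S)).symm
    _ = Nat.card (Cpt m r u) * Nat.card (Cpt n r v) := sum_card_eq u v hu hv hdisj r
    _ = (r + m - des u).choose m * (r + n - des v).choose n := by
        rw [cptCard r u hu, cptCard r v hv]

end ShuffleWords

end Aux

/-- Distribution of the descent number over shuffles:
`Σ_{w ∈ u⧢v} q^{des w} = (1−q)^{m+n+1}·Σ_r C(r+m−i, m)·C(r+n−j, n)·q^r`. -/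
theorem des_distribution_shuffles (m n : ℕ) (u : Fin m → ℤ) (v : Fin n → ℤ)
    (hu : Function.Injective u) (hv : Function.Injective v)
    (hdisj : ∀ a b, u a ≠ v b) (i j : ℕ)
    (hi : des u = i) (hj : des v = j) :
    ∑ᶠ (w : Fin (m + n) → ℤ) (_ : IsShuffle u v w),
        (PowerSeries.X : PowerSeries ℤ) ^ des w
      = (1 - PowerSeries.X) ^ (m + n + 1) *
          PowerSeries.mk
            (fun r => (((r + m - i).choose m * (r + n - j).choose n : ℕ) : ℤ)) := by
  classical
  subst hi hj
  set M := m + n with hM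
  -- Step A: rewrite the finsum as a finite sum over SubS
  have hset : {w : Fin (m + n) → ℤ | IsShuffle u v w} = Set.range (W u v) := by
    ext w
    constructor
    · intro hw
      obtain ⟨S, hS⟩ := isShuffle_surj u v hdisj w hw
      exact ⟨S, hS⟩
    · rintro ⟨S, rfl⟩
      exact W_isShuffle u v S
  have hA : ∑ᶠ (w : Fin (m + n) → ℤ) (_ : IsShuffle u v w),
      (PowerSeries.X : PowerSeries ℤ) ^ des w
      = ∑ S : SubS m n, (PowerSeries.X : PowerSeries ℤ) ^ des (W u v S) := by
    have h0 : ∑ᶠ (w : Fin (m + n) → ℤ) (_ : IsShuffle u v w),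
        (PowerSeries.X : PowerSeries ℤ) ^ des w
        = ∑ᶠ w ∈ {w : Fin (m + n) → ℤ | IsShuffle u v w},
            (PowerSeries.X : PowerSeries ℤ) ^ des w := rfl
    rw [h0, hset, finsum_mem_range (W_param_inj u v hdisj), finsum_eq_sum_of_fintype]
  rw [hA]
  -- Step B: the key power-series identity
  have hkey : (∑ S : SubS m n, (PowerSeries.X : PowerSeries ℤ) ^ des (W u v S))
      * (PowerSeries.invOneSubPow ℤ (M + 1)).val
      = PowerSeries.mk
          (fun r => (((r + m - des u).choose m * (r + n - des v).choose n : ℕ) : ℤ)) := by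
    rw [PowerSeries.invOneSubPow_val_succ_eq_mk_add_choose]
    ext r
    rw [PowerSeries.coeff_mk, Finset.sum_mul, map_sum]
    have hterm : ∀ S : SubS m n,
        (PowerSeries.coeff r) ((PowerSeries.X : PowerSeries ℤ) ^ des (W u v S)
            * PowerSeries.mk (fun b => ((M + b).choose M : ℤ)))
          = (((r + M - des (W u v S)).choose M : ℕ) : ℤ) := by
      intro S
      rw [mul_comm, PowerSeries.coeff_mul_X_pow']
      by_cases hdr : des (W u v S) ≤ r
      · rw [if_pos hdr, PowerSeries.coeff_mk]
        congr 2
        omega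
      · rw [if_neg hdr]
        have hdM : des (W u v S) ≤ M := by
          rw [des_eq]
          exact le_trans (card_le_card (filter_subset _ _)) (le_of_eq (by simp; exact hM.symm))
        symm
        rw [Nat.cast_eq_zero]
        apply Nat.choose_eq_zero_of_lt
        omega
    calc ∑ S : SubS m n, (PowerSeries.coeff r)
            ((PowerSeries.X : PowerSeries ℤ) ^ des (W u v S)
              * PowerSeries.mk (fun b => ((M + b).choose M : ℤ)))
        = ∑ S : SubS m n, (((r + M - des (W u v S)).choose M : ℕ) : ℤ) := by
          exact Finset.sum_congr rfl fun S _ => hterm S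
      _ = ((∑ S : SubS m n, (r + M - des (W u v S)).choose M : ℕ) : ℤ) := by
          rw [Nat.cast_sum]
      _ = (((r + m - des u).choose m * (r + n - des v).choose n : ℕ) : ℤ) := by
          rw [master u v hu hv hdisj r]
      _ = _ := by push_cast; ring
  -- conclude
  have hval_inv : (PowerSeries.invOneSubPow ℤ (M + 1)).val * ((1 - PowerSeries.X) ^ (M + 1)) = 1 := by
    have : ((PowerSeries.invOneSubPow ℤ (M + 1)).inv : PowerSeries ℤ)
        = (1 - PowerSeries.X) ^ (M + 1) := rfl
    rw [← this]
    exact (PowerSeries.invOneSubPow ℤ (M + 1)).val_inv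
  calc ∑ S : SubS m n, (PowerSeries.X : PowerSeries ℤ) ^ des (W u v S)
      = (∑ S : SubS m n, (PowerSeries.X : PowerSeries ℤ) ^ des (W u v S))
        * ((PowerSeries.invOneSubPow ℤ (M + 1)).val * ((1 - PowerSeries.X) ^ (M + 1))) := by
        rw [hval_inv, mul_one]
    _ = ((∑ S : SubS m n, (PowerSeries.X : PowerSeries ℤ) ^ des (W u v S))
        * (PowerSeries.invOneSubPow ℤ (M + 1)).val) * ((1 - PowerSeries.X) ^ (M + 1)) := by
        rw [mul_assoc]
    _ = PowerSeries.mk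
          (fun r => (((r + m - des u).choose m * (r + n - des v).choose n : ℕ) : ℤ))
        * ((1 - PowerSeries.X) ^ (M + 1)) := by rw [hkey]
    _ = _ := by rw [mul_comm]


end CQSym
end

section
/- The involution ω on quasi-symmetric functions determined by ω(F_{n,J}) = F_{n,[n−1]∖J} satisfies ω(F^cyc_{n,J}) = F^cyc_{n,[n]∖J} for every J ⊆ [n]. -/
open Finset

namespace CQSym

/-- The shifted descent set used to decompose `cFqsym` into a sum of `Fqsym`s. -/
def Kshift (n : ℕ) (J : Finset ℕ) (k : Fin n) : Finset ℕ :=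
  (Finset.Icc 1 (n - 1)).filter fun m => ((k : ℕ) + m - 1) % n + 1 ∈ J

lemma Kshift_subset (n : ℕ) (J : Finset ℕ) (k : Fin n) :
    Kshift n J k ⊆ Finset.Icc 1 (n - 1) := Finset.filter_subset _ _

lemma Kshift_compl (n : ℕ) (hn : 0 < n) (J : Finset ℕ) (hJ : J ⊆ Finset.Icc 1 n)
    (k : Fin n) :
    Finset.Icc 1 (n - 1) \ Kshift n J k = Kshift n (Finset.Icc 1 n \ J) k := by
  ext m
  have hmem : ((k : ℕ) + m - 1) % n + 1 ∈ Finset.Icc 1 n := by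
    simp only [Finset.mem_Icc]
    have := Nat.mod_lt ((k : ℕ) + m - 1) hn
    omega
  simp only [Kshift, Finset.mem_sdiff, Finset.mem_filter, Finset.mem_Icc] at *
  tauto

lemma wt_mem_support {n : ℕ} (w : Fin n → ℕ+) (i : Fin n) : w i ∈ (wt w).support := by
  rw [Finsupp.mem_support_iff, wt, Finsupp.finset_sum_apply]
  have h1 : (Finsupp.single (w i) 1 : ℕ+ →₀ ℕ) (w i) = 1 := Finsupp.single_eq_same
  have h2 : (Finsupp.single (w i) 1 : ℕ+ →₀ ℕ) (w i) ≤
      ∑ j, (Finsupp.single (w j) 1 : ℕ+ →₀ ℕ) (w i) :=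
    Finset.single_le_sum (f := fun j => (Finsupp.single (w j) 1 : ℕ+ →₀ ℕ) (w i))
      (fun j _ => Nat.zero_le _) (Finset.mem_univ i)
  omega

lemma finite_wt {n : ℕ} (d : ℕ+ →₀ ℕ) (P : (Fin n → ℕ+) → Prop)
    (h : ∀ u, P u → wt u = d) : Finite {u : Fin n → ℕ+ // P u} := by
  classical
  have : ∀ u : {u : Fin n → ℕ+ // P u}, ∀ i, u.1 i ∈ d.support := by
    intro u i
    have := wt_mem_support u.1 i
    rwa [h u.1 u.2] at this
  apply Finite.of_injective (fun u : {u : Fin n → ℕ+ // P u} =>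
    (fun i => (⟨u.1 i, this u i⟩ : {x : ℕ+ // x ∈ d.support})))
  intro u v huv
  ext i
  exact congrArg Subtype.val (congrFun huv i)

lemma wt_shift {n : ℕ} [NeZero n] (w : Fin n → ℕ+) (k : Fin n) :
    wt (fun i => w (k + i)) = wt w := by
  rw [wt, wt]
  exact Fintype.sum_equiv (Equiv.addLeft k) _ _ (fun i => rfl)

lemma rot_symm_eq {m : ℕ} (k : Fin (m + 1)) : (finRotate (m + 1)).symm k = k - 1 := by
  rw [Equiv.symm_apply_eq, finRotate_succ_apply, sub_add_cancel]

lemma cond_iff {m : ℕ} (J : Finset ℕ) (w : Fin (m + 1) → ℕ+) (k : Fin (m + 1)) :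
    (∀ i : Fin (m + 1), (i : ℕ) + 1 ∈ J → i ≠ (finRotate (m + 1)).symm k →
        w i < w (finRotate (m + 1) i))
    ↔ (∀ i : Fin (m + 1), (i : ℕ) + 1 ∈ Kshift (m + 1) J k →
        w (k + i) < w (finRotate (m + 1) (k + i))) := by
  simp only [rot_symm_eq, finRotate_succ_apply]
  have hmem : ∀ i : Fin (m + 1), (i : ℕ) + 1 ∈ Kshift (m + 1) J k ↔
      ((i : ℕ) < m ∧ ((k + i : Fin (m + 1)) : ℕ) + 1 ∈ J) := by
    intro i
    simp only [Kshift, Finset.mem_filter, Finset.mem_Icc, Fin.val_add]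
    constructor
    · rintro ⟨⟨-, h2⟩, h3⟩
      refine ⟨by omega, ?_⟩
      have : (k : ℕ) + ((i : ℕ) + 1) - 1 = (k : ℕ) + (i : ℕ) := by omega
      rwa [this] at h3
    · rintro ⟨h1, h2⟩
      refine ⟨⟨by omega, by omega⟩, ?_⟩
      have : (k : ℕ) + ((i : ℕ) + 1) - 1 = (k : ℕ) + (i : ℕ) := by omega
      rwa [this]
  have hne : ∀ i : Fin (m + 1), (i : ℕ) < m ↔ k + i ≠ k - 1 := by
    intro i
    constructor
    · intro hi hc
      have : i = -1 := by
        have : k + i = k + (-1) := by rw [hc]; abel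
        exact add_left_cancel this
      have := congrArg Fin.val this
      rw [Fin.coe_neg_one] at this
      omega
    · intro hne
      by_contra hc
      apply hne
      have hi : i = -1 := by
        ext
        rw [Fin.coe_neg_one]
        have := i.isLt
        omega
      rw [hi]; abel
  constructor
  · intro h i hi
    rw [hmem] at hi
    exact h (k + i) hi.2 ((hne i).1 hi.1)
  · intro h i hi hik
    have := h (i - k) (by
      rw [hmem]
      have hki : k + (i - k) = i := by abel
      constructor
      · rw [hne, hki]; exact hik
      · rw [hki]; exact hi)
    have hki : k + (i - k) = i := by abel
    rwa [hki] at this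

lemma cFqsym_eq_sum (m : ℕ) (J : Finset ℕ) :
    cFqsym (m + 1) J = ∑ k : Fin (m + 1), Fqsym (m + 1) (Kshift (m + 1) J k) := by
  classical
  funext d
  have hsum : (∑ k : Fin (m + 1), Fqsym (m + 1) (Kshift (m + 1) J k)) d
      = ∑ k : Fin (m + 1), Fqsym (m + 1) (Kshift (m + 1) J k) d :=
    Finset.sum_apply _ _ _
  rw [hsum, cFqsym]
  simp only [Fqsym]
  rw [← Nat.cast_sum]
  congr 1
  -- equivalence with a sigma type
  have e : {p : (Fin (m + 1) → ℕ+) × Fin (m + 1) //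
      Monotone (fun i : Fin (m + 1) => p.1 (p.2 + i)) ∧
      (∀ i : Fin (m + 1), (i : ℕ) + 1 ∈ J → i ≠ (finRotate (m + 1)).symm p.2 →
        p.1 i < p.1 (finRotate (m + 1) i)) ∧
      wt p.1 = d} ≃
      Σ k : Fin (m + 1), {w : Fin (m + 1) → ℕ+ //
        Monotone w ∧ (∀ i : Fin (m + 1), (i : ℕ) + 1 ∈ Kshift (m + 1) J k →
          w i < w (finRotate (m + 1) i)) ∧ wt w = d} := by
    refine ⟨fun p => ⟨p.1.2, fun i => p.1.1 (p.1.2 + i), p.2.1, ?_, ?_⟩,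
      fun s => ⟨⟨fun i => s.2.1 (i - s.1), s.1⟩, ?_, ?_, ?_⟩, ?_, ?_⟩
    · intro i hi
      have := ((cond_iff J p.1.1 p.1.2).1 p.2.2.1) i hi
      simpa only [finRotate_succ_apply, add_assoc] using this
    · rw [wt_shift]; exact p.2.2.2
    · have : (fun i : Fin (m + 1) => (fun j => s.2.1 (j - s.1)) (s.1 + i)) = s.2.1 := by
        funext i
        congr 1
        abel
      rw [this]
      exact s.2.2.1
    · intro i hi hik
      have h2 := s.2.2.2.1
      have := (cond_iff J (fun j => s.2.1 (j - s.1)) s.1).2 (by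
        intro i' hi'
        have h' := h2 i' hi'
        simp only [finRotate_succ_apply] at h' ⊢
        have e1 : s.1 + i' - s.1 = i' := by abel
        have e2 : s.1 + i' + 1 - s.1 = i' + 1 := by abel
        rw [e1, e2]
        exact h') i hi hik
      exact this
    · have h1 : (fun i : Fin (m + 1) => (fun j => s.2.1 (j - s.1)) (s.1 + i)) = s.2.1 := by
        funext i
        simp only
        congr 1
        abel
      show wt (fun i : Fin (m + 1) => s.2.1 (i - s.1)) = d
      rw [← wt_shift (fun j : Fin (m + 1) => s.2.1 (j - s.1)) s.1, h1]
      exact s.2.2.2.2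
    · rintro ⟨⟨w, k⟩, hp⟩
      apply Subtype.ext
      have h1 : (fun i : Fin (m + 1) => w (k + (i - k))) = w := by
        funext i
        congr 1
        abel
      show ((fun i : Fin (m + 1) => w (k + (i - k))), k) = (w, k)
      rw [h1]
    · rintro ⟨k, w, hw⟩
      refine Sigma.ext rfl (heq_of_eq ?_)
      ext i
      simp only
      congr 1
      abel
  rw [Nat.card_congr e]
  have hfin : ∀ k : Fin (m + 1), Finite {w : Fin (m + 1) → ℕ+ //
      Monotone w ∧ (∀ i : Fin (m + 1), (i : ℕ) + 1 ∈ Kshift (m + 1) J k →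
        w i < w (finRotate (m + 1) i)) ∧ wt w = d} := by
    intro k
    exact finite_wt d _ (fun u hu => hu.2.2)
  have : ∀ k, Fintype {w : Fin (m + 1) → ℕ+ //
      Monotone w ∧ (∀ i : Fin (m + 1), (i : ℕ) + 1 ∈ Kshift (m + 1) J k →
        w i < w (finRotate (m + 1) i)) ∧ wt w = d} := by
    intro k
    have := hfin k
    exact Fintype.ofFinite _
  rw [Nat.card_eq_fintype_card, Fintype.card_sigma]
  congr 1
  funext k
  rw [Nat.card_eq_fintype_card]

/-- The involution `ω`, determined by `ω(F_{n,J}) = F_{n,[n−1]∖J}` and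
linearity, satisfies `ω(F^cyc_{n,J}) = F^cyc_{n,[n]∖J}` for every `J ⊆ [n]`. -/
theorem omega_cFqsym (n : ℕ) (hn : 0 < n)
    (ω : MvPowerSeries ℕ+ ℤ →ₗ[ℤ] MvPowerSeries ℕ+ ℤ)
    (hω : ∀ K ⊆ Finset.Icc 1 (n - 1),
      ω (Fqsym n K) = Fqsym n (Finset.Icc 1 (n - 1) \ K))
    (J : Finset ℕ) (hJ : J ⊆ Finset.Icc 1 n) :
    ω (cFqsym n J) = cFqsym n (Finset.Icc 1 n \ J) := by
  obtain ⟨m, rfl⟩ : ∃ m, n = m + 1 := ⟨n - 1, by omega⟩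
  rw [cFqsym_eq_sum, cFqsym_eq_sum, map_sum]
  refine Finset.sum_congr rfl fun k _ => ?_
  rw [hω _ (Kshift_subset _ _ _), Kshift_compl _ (by omega) _ hJ]

end CQSym
end
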